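/- arXiv:0806.3180 — 6 statements merged into one kernel-verified Lean document; each statement's English description precedes it below -/
import Mathlib

section
/- Let Λ1 and Λ2 be random measures on a locally compact second countable Hausdorff space E. If for every n and all pairwise DISJOINT bounded Borel sets I_1,…,I_n one has (Λ1(I_1),…,Λ1(I_n)) ≤_dcx (Λ2(I_1),…,Λ2(I_n)), then Λ1 ≤_dcx Λ2, i.e., the same inequality holds for all (not necessarily disjoint) finite families of bounded Borel sets. The same result holds for the idcx and idcv orders. -/
open MeasureTheory ENNReal

/-- A function `f : ℝ^n → ℝ` is directionally convex (dcx). -/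
def DirCx {n : ℕ} (f : (Fin n → ℝ) → ℝ) : Prop :=
  ∀ x y p q : Fin n → ℝ, p ≤ x → x ≤ q → p ≤ y → y ≤ q → x + y = p + q →
    f x + f y ≤ f p + f q

/-- A function `f : ℝ^n → ℝ` is directionally concave (dcv). -/
def DirCv {n : ℕ} (f : (Fin n → ℝ) → ℝ) : Prop :=
  ∀ x y p q : Fin n → ℝ, p ≤ x → x ≤ q → p ≤ y → y ≤ q → x + y = p + q →
    f p + f q ≤ f x + f y

/-- The class of dcx functions. -/
def DcxCl (n : ℕ) (f : (Fin n → ℝ) → ℝ) : Prop := DirCx f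

/-- The class of increasing dcx functions. -/
def IdcxCl (n : ℕ) (f : (Fin n → ℝ) → ℝ) : Prop := Monotone f ∧ DirCx f

/-- The class of increasing dcv functions. -/
def IdcvCl (n : ℕ) (f : (Fin n → ℝ) → ℝ) : Prop := Monotone f ∧ DirCv f

/-- `X ≤_C Y`: the integral stochastic order generated by the function class `C`,
for random vectors on a common probability space `(Ω, P)`. -/
def VecOrd {Ω : Type*} [MeasurableSpace Ω] (C : ∀ n : ℕ, ((Fin n → ℝ) → ℝ) → Prop)
    (P : Measure Ω) {n : ℕ} (X Y : Ω → Fin n → ℝ) : Prop :=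
  ∀ f : (Fin n → ℝ) → ℝ, C n f →
    Integrable (fun ω => f (X ω)) P → Integrable (fun ω => f (Y ω)) P →
    ∫ ω, f (X ω) ∂P ≤ ∫ ω, f (Y ω) ∂P

/-- A bounded Borel set: a relatively compact Borel set. -/
def BoundedBorel {E : Type*} [TopologicalSpace E] [MeasurableSpace E] (B : Set E) : Prop :=
  MeasurableSet B ∧ IsCompact (closure B)

/-- The order on random measures generated by the function class `C`: all vectors of values
on finite families of bounded Borel sets are ordered. -/
def RMOrd {Ω E : Type*} [MeasurableSpace Ω] [TopologicalSpace E] [MeasurableSpace E]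
    (C : ∀ n : ℕ, ((Fin n → ℝ) → ℝ) → Prop) (P : Measure Ω) (Λ1 Λ2 : Ω → Measure E) : Prop :=
  ∀ (n : ℕ) (I : Fin n → Set E), (∀ i, BoundedBorel (I i)) →
    VecOrd C P (fun ω i => (Λ1 ω (I i)).toReal) (fun ω i => (Λ2 ω (I i)).toReal)

/-- A random measure: `ω ↦ Λ ω` where evaluations on Borel sets are measurable and each
realization is locally finite (finite on compacts). -/
def IsRandomMeasure {Ω E : Type*} [MeasurableSpace Ω] [TopologicalSpace E] [MeasurableSpace E]
    (Λ : Ω → Measure E) : Prop :=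
  (∀ B : Set E, MeasurableSet B → Measurable fun ω => Λ ω B) ∧
  (∀ ω, ∀ K : Set E, IsCompact K → Λ ω K < ⊤)

lemma dirCx_comp {n k : ℕ} {f : (Fin n → ℝ) → ℝ} {A : (Fin k → ℝ) → Fin n → ℝ}
    (hadd : ∀ v w, A (v + w) = A v + A w) (hmono : Monotone A) (hf : DirCx f) :
    DirCx (fun v => f (A v)) := by
  intro x y p q hpx hxq hpy hyq hsum
  exact hf (A x) (A y) (A p) (A q) (hmono hpx) (hmono hxq) (hmono hpy) (hmono hyq)
    (by rw [← hadd, ← hadd, hsum])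

lemma dirCv_comp {n k : ℕ} {f : (Fin n → ℝ) → ℝ} {A : (Fin k → ℝ) → Fin n → ℝ}
    (hadd : ∀ v w, A (v + w) = A v + A w) (hmono : Monotone A) (hf : DirCv f) :
    DirCv (fun v => f (A v)) := by
  intro x y p q hpx hxq hpy hyq hsum
  exact hf (A x) (A y) (A p) (A q) (hmono hpx) (hmono hxq) (hmono hpy) (hmono hyq)
    (by rw [← hadd, ← hadd, hsum])

/-- If the dcx (resp. idcx, idcv) comparison of the vectors of values holds for all
finite families of pairwise DISJOINT bounded Borel sets, then it holds for all finite families of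
bounded Borel sets, i.e. `Λ1 ≤_dcx Λ2` (resp. idcx, idcv). -/
theorem disjoint_characterization
    {Ω : Type*} [MeasurableSpace Ω] (P : Measure Ω) [IsProbabilityMeasure P]
    {E : Type*} [TopologicalSpace E] [LocallyCompactSpace E] [SecondCountableTopology E]
    [T2Space E] [MeasurableSpace E] [BorelSpace E]
    (C : ∀ n : ℕ, ((Fin n → ℝ) → ℝ) → Prop) (hC : C = DcxCl ∨ C = IdcxCl ∨ C = IdcvCl)
    (Λ1 Λ2 : Ω → Measure E) (hΛ1 : IsRandomMeasure Λ1) (hΛ2 : IsRandomMeasure Λ2)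
    (hdisj : ∀ (n : ℕ) (I : Fin n → Set E), (∀ i, BoundedBorel (I i)) →
      Pairwise (Function.onFun Disjoint I) →
      VecOrd C P (fun ω i => (Λ1 ω (I i)).toReal) (fun ω i => (Λ2 ω (I i)).toReal)) :
    RMOrd C P Λ1 Λ2 := by
  classical
  -- closure of the class C under composition with additive monotone maps
  have hCcomp : ∀ {m m' : ℕ} (f : (Fin m → ℝ) → ℝ) (A : (Fin m' → ℝ) → Fin m → ℝ),
      (∀ v w, A (v + w) = A v + A w) → Monotone A → C m f → C m' (fun v => f (A v)) := by
    rcases hC with h | h | h <;> subst h <;> intro m m' f A hadd hmono hf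
    · exact dirCx_comp hadd hmono hf
    · exact ⟨hf.1.comp hmono, dirCx_comp hadd hmono hf.2⟩
    · exact ⟨hf.1.comp hmono, dirCv_comp hadd hmono hf.2⟩
  intro n I hI
  set k := Fintype.card (Fin n → Bool) with hk
  let e : (Fin n → Bool) ≃ Fin k := Fintype.equivFin _
  -- the atoms of the family I
  let J : (Fin n → Bool) → Set E := fun s => (⋂ i, if s i then I i else (I i)ᶜ) ∩ (⋃ i, I i)
  have hJsub : ∀ s i, s i = true → J s ⊆ I i := by
    intro s i h
    refine Set.inter_subset_left.trans ?_
    refine (Set.iInter_subset _ i).trans ?_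
    rw [if_pos h]
  have hJsubC : ∀ s i, s i = false → J s ⊆ (I i)ᶜ := by
    intro s i h
    refine Set.inter_subset_left.trans ?_
    refine (Set.iInter_subset _ i).trans ?_
    rw [if_neg (by simp [h])]
  -- atoms are pairwise disjoint
  have hJdisj : Pairwise (Function.onFun Disjoint J) := by
    intro s t hst
    obtain ⟨i, hi⟩ := Function.ne_iff.mp hst
    cases hs : s i <;> cases ht : t i
    · exact absurd (hs.trans ht.symm) hi
    · exact Set.disjoint_left.mpr fun x hx hx' => (hJsubC s i hs hx) (hJsub t i ht hx')
    · exact Set.disjoint_left.mpr fun x hx hx' => (hJsubC t i ht hx') (hJsub s i hs hx)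
    · exact absurd (hs.trans ht.symm) hi
  -- atoms are bounded Borel
  have hJmeas : ∀ s, MeasurableSet (J s) := by
    intro s
    refine (MeasurableSet.iInter fun i => ?_).inter (MeasurableSet.iUnion fun i => (hI i).1)
    by_cases h : s i = true
    · rw [if_pos h]; exact (hI i).1
    · rw [if_neg h]; exact (hI i).1.compl
  have hUc : IsCompact (⋃ i, closure (I i)) := isCompact_iUnion fun i => (hI i).2
  have hJcpt : ∀ s, IsCompact (closure (J s)) := by
    intro s
    have hsub : J s ⊆ ⋃ i, closure (I i) :=
      Set.inter_subset_right.trans (Set.iUnion_mono fun i => subset_closure)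
    have hcl : closure (J s) ⊆ ⋃ i, closure (I i) :=
      closure_minimal hsub (isClosed_iUnion_of_finite fun i => isClosed_closure)
    exact hUc.of_isClosed_subset isClosed_closure hcl
  have hJbdd : ∀ j : Fin k, BoundedBorel (J (e.symm j)) :=
    fun j => ⟨hJmeas _, hJcpt _⟩
  -- decomposition of each I i into atoms
  have hIdecomp : ∀ i, I i = ⋃ s ∈ Finset.filter (fun s => s i = true) Finset.univ, J s := by
    intro i
    ext x
    constructor
    · intro hx
      have hxJ : x ∈ J (fun j => decide (x ∈ I j)) := by
        refine Set.mem_inter (Set.mem_iInter.mpr fun j => ?_) (Set.mem_iUnion.mpr ⟨i, hx⟩)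
        by_cases h : x ∈ I j
        · rw [if_pos (by simp [h])]; exact h
        · rw [if_neg (by simp [h])]; exact h
      exact Set.mem_iUnion₂.mpr ⟨fun j => decide (x ∈ I j), by simp [hx], hxJ⟩
    · intro hx
      obtain ⟨s, hs, hxs⟩ := Set.mem_iUnion₂.mp hx
      exact hJsub s i (by simpa using hs) hxs
  -- the linear reconstruction map
  let A : (Fin k → ℝ) → Fin n → ℝ := fun v i => ∑ j, if (e.symm j) i = true then v j else 0
  have hadd : ∀ v w, A (v + w) = A v + A w := by
    intro v w
    funext i
    simp only [A, Pi.add_apply]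
    rw [← Finset.sum_add_distrib]
    refine Finset.sum_congr rfl fun j _ => ?_
    split <;> simp
  have hmono : Monotone A := by
    intro v w hvw i
    refine Finset.sum_le_sum fun j _ => ?_
    split
    · exact hvw j
    · exact le_rfl
  -- key identity: values on I are A applied to values on atoms
  have key : ∀ (Λ : Ω → Measure E), IsRandomMeasure Λ → ∀ ω,
      (fun i => (Λ ω (I i)).toReal) = A (fun j => (Λ ω (J (e.symm j))).toReal) := by
    intro Λ hΛ ω
    funext i
    have hfin : ∀ s, Λ ω (J s) ≠ ⊤ := by
      intro s
      have hsub : J s ⊆ ⋃ i, closure (I i) :=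
        Set.inter_subset_right.trans (Set.iUnion_mono fun i => subset_closure)
      exact ((measure_mono hsub).trans_lt (hΛ.2 ω _ hUc)).ne
    have h1 : Λ ω (I i) = ∑ s ∈ Finset.filter (fun s => s i = true) Finset.univ, Λ ω (J s) := by
      rw [hIdecomp i]
      exact measure_biUnion_finset (fun a _ b _ hab => hJdisj hab) (fun s _ => hJmeas s)
    have h2 : (Λ ω (I i)).toReal
        = ∑ s ∈ Finset.filter (fun s => s i = true) Finset.univ, (Λ ω (J s)).toReal := by
      rw [h1, ENNReal.toReal_sum fun s _ => hfin s]
    rw [h2, Finset.sum_filter]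
    simp only [A]
    rw [← Equiv.sum_comp e.symm (fun s => if s i = true then (Λ ω (J s)).toReal else 0)]
  -- conclude
  intro f hf hint1 hint2
  have hf' : C k (fun v => f (A v)) := hCcomp f A hadd hmono hf
  have heq1 : ∀ ω, f (fun i => (Λ1 ω (I i)).toReal)
      = f (A fun j => (Λ1 ω (J (e.symm j))).toReal) := fun ω => by rw [key Λ1 hΛ1 ω]
  have heq2 : ∀ ω, f (fun i => (Λ2 ω (I i)).toReal)
      = f (A fun j => (Λ2 ω (J (e.symm j))).toReal) := fun ω => by rw [key Λ2 hΛ2 ω]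
  have hJpair : Pairwise (Function.onFun Disjoint fun j => J (e.symm j)) :=
    fun a b hab => hJdisj (e.symm.injective.ne hab)
  have hmain := hdisj k (fun j => J (e.symm j)) hJbdd hJpair (fun v => f (A v)) hf'
    (hint1.congr (Filter.Eventually.of_forall fun ω => heq1 ω))
    (hint2.congr (Filter.Eventually.of_forall fun ω => heq2 ω))
  calc ∫ ω, f (fun i => (Λ1 ω (I i)).toReal) ∂P
      = ∫ ω, f (A fun j => (Λ1 ω (J (e.symm j))).toReal) ∂P :=
        integral_congr_ae (Filter.Eventually.of_forall fun ω => heq1 ω)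
    _ ≤ ∫ ω, f (A fun j => (Λ2 ω (J (e.symm j))).toReal) ∂P := hmain
    _ = ∫ ω, f (fun i => (Λ2 ω (I i)).toReal) ∂P :=
        (integral_congr_ae (Filter.Eventually.of_forall fun ω => heq2 ω)).symm
end

section
/- Let Λ1 and Λ2 be random measures on a locally compact second countable Hausdorff space E with Λ1 ≤_dcx Λ2, and let φ : E → E' be a Borel measurable map to a locally compact second countable Hausdorff space E' such that φ^{-1}(B) is a bounded Borel subset of E for every bounded Borel B ⊆ E'. Then the image random measures Λ'_i(·) = Λ_i(φ^{-1}(·)) satisfy Λ'_1 ≤_dcx Λ'_2. The same holds for the idcx and idcv orders. In particular, deterministic displacement of the points of dcx-ordered point processes preserves the dcx order. -/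
open MeasureTheory ENNReal

/-- The image random measures `Λ'_i(·) = Λ_i(φ⁻¹(·))` under a Borel map `φ : E → E'`
pulling bounded Borel sets back to bounded Borel sets preserve the dcx (resp. idcx, idcv) order. -/
theorem image_preserves_order
    {Ω : Type*} [MeasurableSpace Ω] (P : Measure Ω) [IsProbabilityMeasure P]
    {E : Type*} [TopologicalSpace E] [LocallyCompactSpace E] [SecondCountableTopology E]
    [T2Space E] [MeasurableSpace E] [BorelSpace E]
    {E' : Type*} [TopologicalSpace E'] [LocallyCompactSpace E'] [SecondCountableTopology E']
    [T2Space E'] [MeasurableSpace E'] [BorelSpace E']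
    (C : ∀ n : ℕ, ((Fin n → ℝ) → ℝ) → Prop) (hC : C = DcxCl ∨ C = IdcxCl ∨ C = IdcvCl)
    (Λ1 Λ2 : Ω → Measure E) (hΛ1 : IsRandomMeasure Λ1) (hΛ2 : IsRandomMeasure Λ2)
    (φ : E → E') (hφ : Measurable φ)
    (hφb : ∀ B : Set E', BoundedBorel B → BoundedBorel (φ ⁻¹' B))
    (hord : RMOrd C P Λ1 Λ2) :
    RMOrd C P (fun ω => (Λ1 ω).map φ) (fun ω => (Λ2 ω).map φ) := by
  intro n I hI
  have h := hord n (fun i => φ ⁻¹' I i) (fun i => hφb _ (hI i))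
  have e1 : (fun ω i => ((Λ1 ω).map φ (I i)).toReal)
      = fun ω i => ((Λ1 ω) (φ ⁻¹' I i)).toReal := by
    funext ω i; rw [Measure.map_apply hφ (hI i).1]
  have e2 : (fun ω i => ((Λ2 ω).map φ (I i)).toReal)
      = fun ω i => ((Λ2 ω) (φ ⁻¹' I i)).toReal := by
    funext ω i; rw [Measure.map_apply hφ (hI i).1]
  rw [e1, e2]
  exact h
end

section
/- Let Λ1 and Λ2 be random measures on a locally compact second countable Hausdorff space E with Λ1 ≤_dcx Λ2 (so they have a common mean measure α), and let f : E → [0,∞) be measurable with 0 < ∫_E f dα < ∞. Then the f-mixed Palm versions satisfy (Λ1)_f ≤_idcx (Λ2)_f; explicitly, for every n, all bounded Borel sets B_1,…,B_n and every idcx g : ℝ^n → ℝ, E[(∫_E f dΛ1) · g(Λ1(B_1),…,Λ1(B_n))] ≤ E[(∫_E f dΛ2) · g(Λ2(B_1),…,Λ2(B_n))] whenever both expectations exist. -/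
open MeasureTheory ENNReal

lemma max0_4pt {u a b v : ℝ} (h1 : u ≤ a) (h2 : a ≤ v) (h3 : u ≤ b) (h5 : a + b = u + v) :
    max a 0 + max b 0 ≤ max u 0 + max v 0 := by
  rcases le_total 0 a with ha | ha <;> rcases le_total 0 b with hb | hb <;>
    rcases le_total 0 u with hu | hu <;> rcases le_total 0 v with hv | hv <;>
      simp only [max_eq_left, max_eq_right, ha, hb, hu, hv, max_eq_left_iff,
        max_eq_right_iff, sup_of_le_left, sup_of_le_right] <;> linarith

lemma prod_4pt {sp sx sy sq Hp Hx Hy Hq : ℝ} (h0 : 0 ≤ sp) (h1 : sp ≤ sx) (h2 : sp ≤ sy)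
    (h3 : sx + sy ≤ sp + sq) (H0 : 0 ≤ Hp) (H1 : Hp ≤ Hx) (H2 : Hp ≤ Hy) (H3 : Hx ≤ Hq)
    (H4 : Hy ≤ Hq) (H5 : Hx + Hy ≤ Hp + Hq) :
    sx * Hx + sy * Hy ≤ sp * Hp + sq * Hq := by
  nlinarith [mul_nonneg (sub_nonneg.2 h1) (sub_nonneg.2 H3),
    mul_nonneg (sub_nonneg.2 h2) (sub_nonneg.2 H4),
    mul_nonneg (by linarith : (0:ℝ) ≤ sq - (sx + sy - sp)) (by linarith : (0:ℝ) ≤ Hq),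
    mul_nonneg h0 (by linarith : (0:ℝ) ≤ Hp + Hq - Hx - Hy)]

lemma dirCx_max0 {n : ℕ} {g : (Fin n → ℝ) → ℝ} (hm : Monotone g) (hd : DirCx g) :
    DirCx (fun v => g (fun i => max (v i) 0)) := by
  intro x y p q hpx hxq hpy hyq hsum
  set x' : Fin n → ℝ := fun i => max (x i) 0 with hx'
  set y' : Fin n → ℝ := fun i => max (y i) 0 with hy'
  set p' : Fin n → ℝ := fun i => max (p i) 0 with hp'
  set q' : Fin n → ℝ := fun i => max (q i) 0 with hq'
  set qh : Fin n → ℝ := fun i => x' i + y' i - p' i with hqh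
  have hsum' : ∀ i, x i + y i = p i + q i := fun i => congrFun hsum i
  have hle : ∀ i, x' i + y' i ≤ p' i + q' i := fun i =>
    max0_4pt (hpx i) (hxq i) (hpy i) (hsum' i)
  have h1 : p' ≤ x' := fun i => max_le_max (hpx i) le_rfl
  have h2 : p' ≤ y' := fun i => max_le_max (hpy i) le_rfl
  have h3 : x' ≤ qh := fun i => by simp only [hqh]; have := h2 i; linarith
  have h4 : y' ≤ qh := fun i => by simp only [hqh]; have := h1 i; linarith
  have h5 : qh ≤ q' := fun i => by simp only [hqh]; have := hle i; linarith
  have key : g x' + g y' ≤ g p' + g qh := by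
    refine hd x' y' p' qh h1 h3 h2 h4 ?_
    funext i; simp only [Pi.add_apply, hqh]; ring
  have := hm h5
  simpa using le_trans key (by linarith)

lemma cont_of_mono_dirCx {n : ℕ} {g : (Fin n → ℝ) → ℝ} (hm : Monotone g) (hd : DirCx g) :
    Continuous g := by
  rw [continuous_iff_continuousAt]
  intro a
  set u : ℝ → ℝ := fun t => g (fun i => a i + t) with hu
  have hum : Monotone u := fun s t hst => hm (fun i => by dsimp; linarith)
  have h2 : ∀ t : ℝ, 0 ≤ t → 2 * u (t / 2) ≤ u 0 + u t := by
    intro t ht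
    have := hd (fun i => a i + t / 2) (fun i => a i + t / 2) (fun i => a i + 0)
      (fun i => a i + t) (fun i => by dsimp; linarith) (fun i => by dsimp; linarith)
      (fun i => by dsimp; linarith) (fun i => by dsimp; linarith)
      (by funext i; simp only [Pi.add_apply]; ring)
    show 2 * g (fun i => a i + t / 2) ≤ g (fun i => a i + 0) + g (fun i => a i + t)
    linarith
  have hsym : ∀ t : ℝ, 0 ≤ t → 2 * u 0 ≤ u (-t) + u t := by
    intro t ht
    have := hd (fun i => a i + 0) (fun i => a i + 0) (fun i => a i + -t)
      (fun i => a i + t) (fun i => by dsimp; linarith) (fun i => by dsimp; linarith)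
      (fun i => by dsimp; linarith) (fun i => by dsimp; linarith)
      (by funext i; simp only [Pi.add_apply]; ring)
    show 2 * g (fun i => a i + 0) ≤ g (fun i => a i + -t) + g (fun i => a i + t)
    linarith
  have geo : ∀ m : ℕ, (2:ℝ) ^ m * (u (1 / 2 ^ m) - u 0) ≤ u 1 - u 0 := by
    intro m
    induction m with
    | zero => simp
    | succ m ih =>
      have hh := h2 (1 / 2 ^ m) (by positivity)
      have he : (1:ℝ) / 2 ^ m / 2 = 1 / 2 ^ (m + 1) := by ring
      rw [he] at hh
      have hpow : (0:ℝ) ≤ 2 ^ m := by positivity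
      rw [pow_succ]
      rw [pow_succ] at hh
      nlinarith [mul_le_mul_of_nonneg_left hh hpow]
  -- key estimate
  have key : ∀ ε : ℝ, 0 < ε → ∃ δ : ℝ, 0 < δ ∧ ∀ t : ℝ, |t| ≤ δ → |u t - u 0| ≤ ε := by
    intro ε hε
    obtain ⟨m, hmm⟩ := pow_unbounded_of_one_lt ((u 1 - u 0) / ε) (one_lt_two (α := ℝ))
    refine ⟨1 / 2 ^ m, by positivity, ?_⟩
    intro t ht
    have hδ : (0:ℝ) < 1 / 2 ^ m := by positivity
    have hub : u (1 / 2 ^ m) - u 0 ≤ ε := by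
      have h1 : (u 1 - u 0) ≤ ε * 2 ^ m := by
        rw [div_lt_iff₀ hε] at hmm; nlinarith
      have hge : (0:ℝ) < 2 ^ m := by positivity
      have := geo m
      nlinarith
    have hup : u t ≤ u 0 + ε := by
      have : u t ≤ u (1 / 2 ^ m) := hum (le_trans (le_abs_self t) ht)
      linarith
    have hlo : u 0 - ε ≤ u t := by
      have habs : -(1 / 2 ^ m) ≤ t := by
        have := neg_abs_le t; linarith
      have h1 : u (-(1 / 2 ^ m)) ≤ u t := hum habs
      have h2' := hsym (1 / 2 ^ m) (le_of_lt hδ)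
      linarith
    rw [abs_le]; constructor <;> linarith
  rw [Metric.continuousAt_iff]
  intro ε hε
  obtain ⟨δ, hδ, hkey⟩ := key (ε / 2) (by linarith)
  refine ⟨δ, hδ, ?_⟩
  intro x hx
  have hcomp : ∀ i, |x i - a i| ≤ δ := by
    intro i
    have := dist_le_pi_dist x a i
    rw [Real.dist_eq] at this
    exact le_of_lt (lt_of_le_of_lt this hx)
  have hxu : g x ≤ u δ := by
    apply hm; intro i; have := hcomp i; rw [abs_le] at this; dsimp; linarith
  have hxl : u (-δ) ≤ g x := by
    apply hm; intro i; have := hcomp i; rw [abs_le] at this; dsimp; linarith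
  have h1 := hkey δ (by rw [abs_of_nonneg (le_of_lt hδ)])
  have h2' := hkey (-δ) (by rw [abs_neg, abs_of_nonneg (le_of_lt hδ)])
  have hu0 : u 0 = g a := by
    show g (fun i => a i + 0) = g a
    simp only [add_zero]
  rw [Real.dist_eq, abs_le] at *
  have : |g x - g a| ≤ ε / 2 := by
    rw [abs_le]; constructor
    · have := h2'.1; rw [hu0] at *; linarith
    · have := h1.2; rw [hu0] at *; linarith
  calc |g x - g a| ≤ ε / 2 := this
    _ < ε := by linarith

lemma linear_4pt {k : ℕ} (r : Fin k → ℝ) {x y p q : Fin k → ℝ} (hsum : x + y = p + q) :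
    (∑ j, r j * x j) + (∑ j, r j * y j) = (∑ j, r j * p j) + (∑ j, r j * q j) := by
  rw [← Finset.sum_add_distrib, ← Finset.sum_add_distrib]
  refine Finset.sum_congr rfl fun j _ => ?_
  have : x j + y j = p j + q j := congrFun hsum j
  rw [← mul_add, ← mul_add, this]

lemma dirCx_linear {k : ℕ} (r : Fin k → ℝ) : DirCx (fun w => ∑ j, r j * w j) := by
  intro x y p q _ _ _ _ hsum
  exact le_of_eq (linear_4pt r hsum)

lemma dirCx_neg_linear {k : ℕ} (r : Fin k → ℝ) : DirCx (fun w => -∑ j, r j * w j) := by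
  intro x y p q _ _ _ _ hsum
  have := linear_4pt r hsum
  dsimp only
  linarith

lemma sum_mono {k : ℕ} (r : Fin k → ℝ) (hr : ∀ j, 0 ≤ r j) {x y : Fin k → ℝ} (h : x ≤ y) :
    ∑ j, r j * x j ≤ ∑ j, r j * y j :=
  Finset.sum_le_sum fun j _ => mul_le_mul_of_nonneg_left (h j) (hr j)

lemma blockF_dirCx {k n : ℕ} (r : Fin k → ℝ) (hr : ∀ j, 0 ≤ r j) {g : (Fin n → ℝ) → ℝ}
    (hm : Monotone g) (hd : DirCx g) :
    DirCx (fun u : Fin (k + n) → ℝ =>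
      max (∑ j, r j * u (Fin.castAdd n j)) 0 *
        (g (fun i => max (u (Fin.natAdd k i)) 0) - g 0)) := by
  intro x y p q hpx hxq hpy hyq hsum
  dsimp only
  have hMg : Monotone (fun v : Fin n → ℝ => g (fun i => max (v i) 0)) :=
    fun v w hvw => hm (fun i => max_le_max (hvw i) le_rfl)
  -- restricted vectors
  have hsumL : (fun j => x (Fin.castAdd n j)) + (fun j => y (Fin.castAdd n j)) =
      (fun j => p (Fin.castAdd n j)) + (fun j => q (Fin.castAdd n j)) := by
    funext j; exact congrFun hsum (Fin.castAdd n j)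
  have hsumR : (fun i => x (Fin.natAdd k i)) + (fun i => y (Fin.natAdd k i)) =
      (fun i => p (Fin.natAdd k i)) + (fun i => q (Fin.natAdd k i)) := by
    funext i; exact congrFun hsum (Fin.natAdd k i)
  have hLpx : (∑ j, r j * p (Fin.castAdd n j)) ≤ ∑ j, r j * x (Fin.castAdd n j) :=
    sum_mono r hr (fun j => hpx _)
  have hLxq : (∑ j, r j * x (Fin.castAdd n j)) ≤ ∑ j, r j * q (Fin.castAdd n j) :=
    sum_mono r hr (fun j => hxq _)
  have hLpy : (∑ j, r j * p (Fin.castAdd n j)) ≤ ∑ j, r j * y (Fin.castAdd n j) :=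
    sum_mono r hr (fun j => hpy _)
  have hLsum := linear_4pt r hsumL
  refine prod_4pt (le_max_right _ _) (max_le_max hLpx le_rfl) (max_le_max hLpy le_rfl)
    (max0_4pt hLpx hLxq hLpy hLsum) ?_ ?_ ?_ ?_ ?_ ?_
  · have : g 0 ≤ g (fun i => max (p (Fin.natAdd k i)) 0) :=
      hm (fun i => le_max_right _ _)
    linarith
  · have := hMg (fun i => hpx (Fin.natAdd k i))
    dsimp at this; linarith
  · have := hMg (fun i => hpy (Fin.natAdd k i))
    dsimp at this; linarith
  · have := hMg (fun i => hxq (Fin.natAdd k i))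
    dsimp at this; linarith
  · have := hMg (fun i => hyq (Fin.natAdd k i))
    dsimp at this; linarith
  · have := dirCx_max0 hm hd (fun i => x (Fin.natAdd k i)) (fun i => y (Fin.natAdd k i))
      (fun i => p (Fin.natAdd k i)) (fun i => q (Fin.natAdd k i))
      (fun i => hpx _) (fun i => hxq _) (fun i => hpy _) (fun i => hyq _) hsumR
    dsimp at this; linarith

noncomputable section SF

variable {E : Type*} [MeasurableSpace E]

/-- nonzero values of a simple function -/
def sfR (χ : SimpleFunc E ℝ≥0∞) : Finset ℝ≥0∞ := χ.range.filter (fun c => c ≠ 0)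

def sfK (χ : SimpleFunc E ℝ≥0∞) : ℕ := (sfR χ).card

def sfC (χ : SimpleFunc E ℝ≥0∞) (j : Fin (sfK χ)) : ℝ≥0∞ :=
  ((sfR χ).equivFin.symm j : ℝ≥0∞)

def sfA (χ : SimpleFunc E ℝ≥0∞) (j : Fin (sfK χ)) : Set E := χ ⁻¹' {sfC χ j}

lemma sfC_mem (χ : SimpleFunc E ℝ≥0∞) (j : Fin (sfK χ)) : sfC χ j ∈ sfR χ :=
  ((sfR χ).equivFin.symm j).2

lemma sfC_ne_zero (χ : SimpleFunc E ℝ≥0∞) (j : Fin (sfK χ)) : sfC χ j ≠ 0 :=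
  (Finset.mem_filter.1 (sfC_mem χ j)).2

lemma sfC_mem_range (χ : SimpleFunc E ℝ≥0∞) (j : Fin (sfK χ)) : sfC χ j ∈ χ.range :=
  (Finset.mem_filter.1 (sfC_mem χ j)).1

lemma sfA_measurable (χ : SimpleFunc E ℝ≥0∞) (j : Fin (sfK χ)) : MeasurableSet (sfA χ j) :=
  χ.measurableSet_fiber _

lemma sf_rep (χ : SimpleFunc E ℝ≥0∞) (μ : Measure E) :
    ∫⁻ x, χ x ∂μ = ∑ j, sfC χ j * μ (sfA χ j) := by
  rw [SimpleFunc.lintegral_eq_lintegral, SimpleFunc.lintegral]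
  have h1 : ∑ c ∈ χ.range, c * μ (χ ⁻¹' {c}) = ∑ c ∈ sfR χ, c * μ (χ ⁻¹' {c}) := by
    refine (Finset.sum_subset (Finset.filter_subset _ _) ?_).symm
    intro c _ hc
    have : c = 0 := by
      by_contra h
      exact hc (Finset.mem_filter.2 ⟨‹c ∈ χ.range›, h⟩)
    simp [this]
  rw [h1, ← Finset.sum_coe_sort (sfR χ) (fun c => c * μ (χ ⁻¹' {c}))]
  exact (Equiv.sum_comp ((sfR χ).equivFin.symm)
    (fun c : (sfR χ) => (c : ℝ≥0∞) * μ (χ ⁻¹' {(c : ℝ≥0∞)}))).symm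

end SF

lemma rm_facts {Ω E : Type*} [MeasurableSpace Ω] [TopologicalSpace E] [MeasurableSpace E]
    (χ : SimpleFunc E ℝ≥0∞) (Km : Set E) (hKc : IsCompact Km)
    (hsub : ∀ x, χ x ≠ 0 → x ∈ Km) (hlt : ∀ x, χ x ≠ ⊤)
    (Λ : Ω → Measure E) (hΛ : IsRandomMeasure Λ) :
    (∀ ω, ∫⁻ x, χ x ∂(Λ ω) ≠ ⊤) ∧
    Measurable (fun ω => ∫⁻ x, χ x ∂(Λ ω)) ∧
    (∀ ω, (∫⁻ x, χ x ∂(Λ ω)).toReal = ∑ j, (sfC χ j).toReal * ((Λ ω) (sfA χ j)).toReal) := by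
  have hAsub : ∀ j, sfA χ j ⊆ Km := by
    intro j x hx
    apply hsub x
    have hx' : χ x = sfC χ j := hx
    rw [hx']
    exact sfC_ne_zero χ j
  have hAfin : ∀ ω j, Λ ω (sfA χ j) ≠ ⊤ :=
    fun ω j => ((measure_mono (hAsub j)).trans_lt (hΛ.2 ω Km hKc)).ne
  have hCfin : ∀ j, sfC χ j ≠ ⊤ := by
    intro j
    obtain ⟨x, hx⟩ := SimpleFunc.mem_range.1 (sfC_mem_range χ j)
    rw [← hx]; exact hlt x
  refine ⟨?_, ?_, ?_⟩
  · intro ω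
    rw [sf_rep]
    exact (ENNReal.sum_lt_top.2 fun j _ =>
      (ENNReal.mul_lt_top (hCfin j).lt_top (hAfin ω j).lt_top)).ne
  · have : (fun ω => ∫⁻ x, χ x ∂(Λ ω)) = fun ω => ∑ j, sfC χ j * Λ ω (sfA χ j) := by
      funext ω; exact sf_rep χ (Λ ω)
    rw [this]
    exact Finset.measurable_sum _ fun j _ =>
      (hΛ.1 _ (sfA_measurable χ j)).const_mul _
  · intro ω
    rw [sf_rep, ENNReal.toReal_sum fun j _ => ENNReal.mul_ne_top (hCfin j) (hAfin ω j)]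
    exact Finset.sum_congr rfl fun j _ => ENNReal.toReal_mul

structure PalmFacts {Ω E : Type*} [MeasurableSpace Ω] [TopologicalSpace E] [MeasurableSpace E]
    (P : Measure Ω) (Λ : Ω → Measure E) (χ : ℕ → SimpleFunc E ℝ≥0∞) (F₀ : E → ℝ≥0∞) : Prop where
  lfin : ∀ m ω, ∫⁻ x, χ m x ∂(Λ ω) ≠ ⊤
  lmeas : ∀ m, Measurable fun ω => ∫⁻ x, χ m x ∂(Λ ω)
  lrep : ∀ m ω, (∫⁻ x, χ m x ∂(Λ ω)).toReal
      = ∑ j, (sfC (χ m) j).toReal * ((Λ ω) (sfA (χ m) j)).toReal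
  tmeas : Measurable fun ω => ∫⁻ x, F₀ x ∂(Λ ω)
  tsup : ⨆ m, ∫⁻ ω, ∫⁻ x, χ m x ∂(Λ ω) ∂P = ∫⁻ ω, ∫⁻ x, F₀ x ∂(Λ ω) ∂P
  aefin : ∀ᵐ ω ∂P, (∫⁻ x, F₀ x ∂(Λ ω)) < ⊤
  tint : Integrable (fun ω => (∫⁻ x, F₀ x ∂(Λ ω)).toReal) P
  tre : ∫ ω, (∫⁻ x, F₀ x ∂(Λ ω)).toReal ∂P = (∫⁻ ω, ∫⁻ x, F₀ x ∂(Λ ω) ∂P).toReal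
  smeas : ∀ m, Measurable fun ω => ∑ j, (sfC (χ m) j).toReal * ((Λ ω) (sfA (χ m) j)).toReal
  sle : ∀ m, ∀ᵐ ω ∂P, (∑ j, (sfC (χ m) j).toReal * ((Λ ω) (sfA (χ m) j)).toReal)
      ≤ (∫⁻ x, F₀ x ∂(Λ ω)).toReal
  stend : ∀ᵐ ω ∂P, Filter.Tendsto
      (fun m => ∑ j, (sfC (χ m) j).toReal * ((Λ ω) (sfA (χ m) j)).toReal)
      Filter.atTop (nhds ((∫⁻ x, F₀ x ∂(Λ ω)).toReal))
  sint : ∀ m, Integrable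
      (fun ω => ∑ j, (sfC (χ m) j).toReal * ((Λ ω) (sfA (χ m) j)).toReal) P
  slift : ∀ m, ∫⁻ ω, ENNReal.ofReal
        (∑ j, (sfC (χ m) j).toReal * ((Λ ω) (sfA (χ m) j)).toReal) ∂P
      = ∫⁻ ω, ∫⁻ x, χ m x ∂(Λ ω) ∂P

lemma build_facts {Ω E : Type*} [MeasurableSpace Ω] [TopologicalSpace E] [MeasurableSpace E]
    (P : Measure Ω) (Λ : Ω → Measure E) (χ : ℕ → SimpleFunc E ℝ≥0∞) (F₀ : E → ℝ≥0∞)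
    (hΛ : IsRandomMeasure Λ)
    (K : ℕ → Set E) (hKc : ∀ m, IsCompact (K m))
    (hsub : ∀ m x, χ m x ≠ 0 → x ∈ K m)
    (hlt : ∀ m x, χ m x ≠ ⊤)
    (hmono : ∀ x, Monotone fun m => χ m x)
    (hsup : ∀ x, ⨆ m, χ m x = F₀ x)
    (hfin : (∫⁻ ω, ∫⁻ x, F₀ x ∂(Λ ω) ∂P) ≠ ⊤) :
    PalmFacts P Λ χ F₀ := by
  have base : ∀ m, (∀ ω, ∫⁻ x, χ m x ∂(Λ ω) ≠ ⊤) ∧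
      Measurable (fun ω => ∫⁻ x, χ m x ∂(Λ ω)) ∧
      (∀ ω, (∫⁻ x, χ m x ∂(Λ ω)).toReal
        = ∑ j, (sfC (χ m) j).toReal * ((Λ ω) (sfA (χ m) j)).toReal) :=
    fun m => rm_facts (χ m) (K m) (hKc m) (hsub m) (hlt m) Λ hΛ
  have lfin := fun m => (base m).1
  have lmeas := fun m => (base m).2.1
  have lrep := fun m => (base m).2.2
  have hle : ∀ m x, χ m x ≤ F₀ x := by
    intro m x
    rw [← hsup x]
    exact le_iSup (fun m => χ m x) m
  have lle : ∀ m ω, ∫⁻ x, χ m x ∂(Λ ω) ≤ ∫⁻ x, F₀ x ∂(Λ ω) :=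
    fun m ω => lintegral_mono (hle m)
  have lmono : ∀ ω, Monotone fun m => ∫⁻ x, χ m x ∂(Λ ω) :=
    fun ω m m' h => lintegral_mono fun x => hmono x h
  have tlim : ∀ ω, (⨆ m, ∫⁻ x, χ m x ∂(Λ ω)) = ∫⁻ x, F₀ x ∂(Λ ω) := by
    intro ω
    rw [← lintegral_iSup (fun m => (χ m).measurable) (fun m m' h x => hmono x h)]
    exact lintegral_congr fun x => hsup x
  have tmeas : Measurable fun ω => ∫⁻ x, F₀ x ∂(Λ ω) := by
    have h : (fun ω => ∫⁻ x, F₀ x ∂(Λ ω)) = fun ω => ⨆ m, ∫⁻ x, χ m x ∂(Λ ω) :=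
      funext fun ω => (tlim ω).symm
    rw [h]
    exact Measurable.iSup lmeas
  have tsup : ⨆ m, ∫⁻ ω, ∫⁻ x, χ m x ∂(Λ ω) ∂P = ∫⁻ ω, ∫⁻ x, F₀ x ∂(Λ ω) ∂P := by
    rw [← lintegral_iSup lmeas (fun m m' h ω => lmono ω h)]
    exact lintegral_congr fun ω => tlim ω
  have aefin : ∀ᵐ ω ∂P, (∫⁻ x, F₀ x ∂(Λ ω)) < ⊤ := ae_lt_top tmeas hfin
  have tint : Integrable (fun ω => (∫⁻ x, F₀ x ∂(Λ ω)).toReal) P :=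
    integrable_toReal_of_lintegral_ne_top tmeas.aemeasurable hfin
  have smeas : ∀ m, Measurable fun ω =>
      ∑ j, (sfC (χ m) j).toReal * ((Λ ω) (sfA (χ m) j)).toReal := by
    intro m
    have h : (fun ω => ∑ j, (sfC (χ m) j).toReal * ((Λ ω) (sfA (χ m) j)).toReal)
        = fun ω => (∫⁻ x, χ m x ∂(Λ ω)).toReal :=
      funext fun ω => (lrep m ω).symm
    rw [h]
    exact (lmeas m).ennreal_toReal
  have snonneg : ∀ m ω, (0:ℝ) ≤ ∑ j, (sfC (χ m) j).toReal * ((Λ ω) (sfA (χ m) j)).toReal :=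
    fun m ω => Finset.sum_nonneg fun j _ =>
      mul_nonneg ENNReal.toReal_nonneg ENNReal.toReal_nonneg
  have sle : ∀ m, ∀ᵐ ω ∂P, (∑ j, (sfC (χ m) j).toReal * ((Λ ω) (sfA (χ m) j)).toReal)
      ≤ (∫⁻ x, F₀ x ∂(Λ ω)).toReal := by
    intro m
    filter_upwards [aefin] with ω hω
    rw [← lrep m ω]
    exact ENNReal.toReal_mono hω.ne (lle m ω)
  refine ⟨lfin, lmeas, lrep, tmeas, tsup, aefin, tint,
    integral_toReal tmeas.aemeasurable aefin, smeas, sle, ?_, ?_, ?_⟩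
  · -- stend
    filter_upwards [aefin] with ω hω
    have h1 : Filter.Tendsto (fun m => ∫⁻ x, χ m x ∂(Λ ω)) Filter.atTop
        (nhds (∫⁻ x, F₀ x ∂(Λ ω))) := by
      rw [← tlim ω]
      exact tendsto_atTop_iSup (lmono ω)
    have h2 := (ENNReal.tendsto_toReal hω.ne).comp h1
    have h3 : ((fun z : ℝ≥0∞ => z.toReal) ∘ fun m => ∫⁻ x, χ m x ∂(Λ ω))
        = fun m => ∑ j, (sfC (χ m) j).toReal * ((Λ ω) (sfA (χ m) j)).toReal :=
      funext fun m => lrep m ω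
    rwa [h3] at h2
  · -- sint
    intro m
    refine tint.mono' (smeas m).aestronglyMeasurable ?_
    filter_upwards [sle m] with ω hω
    rw [Real.norm_eq_abs, abs_of_nonneg (snonneg m ω)]
    exact hω
  · -- slift
    intro m
    refine lintegral_congr fun ω => ?_
    rw [← lrep m ω, ENNReal.ofReal_toReal (lfin m ω)]

/-- If `Λ1 ≤_dcx Λ2` and `f : E → [0,∞)` is measurable with
`0 < E[∫ f dΛ_i] < ∞`, then the `f`-mixed Palm versions satisfy `(Λ1)_f ≤_idcx (Λ2)_f`:
for all bounded Borel `B_1,…,B_n` and every idcx `g`,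
`E[(∫ f dΛ1)·g(Λ1(B_1),…,Λ1(B_n))] ≤ E[(∫ f dΛ2)·g(Λ2(B_1),…,Λ2(B_n))]`
whenever both expectations exist. -/
theorem mixed_palm_idcx
    {Ω : Type*} [MeasurableSpace Ω] (P : Measure Ω) [IsProbabilityMeasure P]
    {E : Type*} [TopologicalSpace E] [LocallyCompactSpace E] [SecondCountableTopology E]
    [T2Space E] [MeasurableSpace E] [BorelSpace E]
    (Λ1 Λ2 : Ω → Measure E) (hΛ1 : IsRandomMeasure Λ1) (hΛ2 : IsRandomMeasure Λ2)
    (f : E → ℝ) (hf0 : ∀ x, 0 ≤ f x) (hfm : Measurable f)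
    (hpos1 : 0 < ∫⁻ ω, ∫⁻ x, ENNReal.ofReal (f x) ∂(Λ1 ω) ∂P)
    (hfin1 : ∫⁻ ω, ∫⁻ x, ENNReal.ofReal (f x) ∂(Λ1 ω) ∂P < ⊤)
    (hpos2 : 0 < ∫⁻ ω, ∫⁻ x, ENNReal.ofReal (f x) ∂(Λ2 ω) ∂P)
    (hfin2 : ∫⁻ ω, ∫⁻ x, ENNReal.ofReal (f x) ∂(Λ2 ω) ∂P < ⊤)
    (hord : RMOrd DcxCl P Λ1 Λ2) :
    ∀ (n : ℕ) (B : Fin n → Set E), (∀ i, BoundedBorel (B i)) →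
      ∀ g : (Fin n → ℝ) → ℝ, Monotone g → DirCx g →
        Integrable (fun ω =>
          (∫⁻ x, ENNReal.ofReal (f x) ∂(Λ1 ω)).toReal *
            g (fun i => (Λ1 ω (B i)).toReal)) P →
        Integrable (fun ω =>
          (∫⁻ x, ENNReal.ofReal (f x) ∂(Λ2 ω)).toReal *
            g (fun i => (Λ2 ω (B i)).toReal)) P →
        ∫ ω, (∫⁻ x, ENNReal.ofReal (f x) ∂(Λ1 ω)).toReal *
            g (fun i => (Λ1 ω (B i)).toReal) ∂P ≤
          ∫ ω, (∫⁻ x, ENNReal.ofReal (f x) ∂(Λ2 ω)).toReal *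
            g (fun i => (Λ2 ω (B i)).toReal) ∂P := by
  intro n B hB g hgmono hgdcx hint1 hint2
  have hgcont : Continuous g := cont_of_mono_dirCx hgmono hgdcx
  set F₀ : E → ℝ≥0∞ := fun x => ENNReal.ofReal (f x) with hF₀def
  have hF₀ : Measurable F₀ := hfm.ennreal_ofReal
  set K : CompactExhaustion E := CompactExhaustion.choice E with hK
  have hKmeas : ∀ m : ℕ, MeasurableSet (K m) := fun m => (K.isCompact m).isClosed.measurableSet
  set χ : ℕ → SimpleFunc E ℝ≥0∞ := fun m => (SimpleFunc.eapprox F₀ m).restrict (K m) with hχ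
  have hχapp : ∀ (m : ℕ) (x : E), χ m x = (K m : Set E).indicator (⇑(SimpleFunc.eapprox F₀ m)) x :=
    fun m x => SimpleFunc.restrict_apply _ (hKmeas m) x
  have hχsub : ∀ m x, χ m x ≠ 0 → x ∈ K m := by
    intro m x h
    by_contra hx
    exact h (by rw [hχapp]; exact Set.indicator_of_notMem hx _)
  have hχlt : ∀ m x, χ m x ≠ ⊤ := by
    intro m x
    rw [hχapp]
    by_cases hx : x ∈ K m
    · rw [Set.indicator_of_mem hx]; exact (SimpleFunc.eapprox_lt_top F₀ m x).ne
    · rw [Set.indicator_of_notMem hx]; exact ENNReal.zero_ne_top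
  have hχmono : ∀ x, Monotone fun m => χ m x := by
    intro x m m' h
    dsimp only
    rw [hχapp, hχapp]
    by_cases hx : x ∈ K m
    · rw [Set.indicator_of_mem hx, Set.indicator_of_mem (K.subset h hx)]
      exact SimpleFunc.monotone_eapprox F₀ h x
    · rw [Set.indicator_of_notMem hx]; exact zero_le
  have hχsup : ∀ x, ⨆ m, χ m x = F₀ x := by
    intro x
    apply le_antisymm
    · refine iSup_le fun m => ?_
      rw [hχapp]
      by_cases hx : x ∈ K m
      · rw [Set.indicator_of_mem hx, ← SimpleFunc.iSup_eapprox_apply hF₀ x]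
        exact le_iSup (fun m => SimpleFunc.eapprox F₀ m x) m
      · rw [Set.indicator_of_notMem hx]; exact zero_le
    · rw [← SimpleFunc.iSup_eapprox_apply hF₀ x]
      refine iSup_le fun m => ?_
      have hx : x ∈ K (max m (K.find x)) := K.subset (le_max_right _ _) (K.mem_find x)
      refine le_iSup_of_le (max m (K.find x)) ?_
      rw [hχapp, Set.indicator_of_mem hx]
      exact SimpleFunc.monotone_eapprox F₀ (le_max_left _ _) x
  have facts1 : PalmFacts P Λ1 χ F₀ :=
    build_facts P Λ1 χ F₀ hΛ1 (fun m => K m) (fun m => K.isCompact m)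
      hχsub hχlt hχmono hχsup hfin1.ne
  have facts2 : PalmFacts P Λ2 χ F₀ :=
    build_facts P Λ2 χ F₀ hΛ2 (fun m => K m) (fun m => K.isCompact m)
      hχsub hχlt hχmono hχsup hfin2.ne
  -- vector measurability
  have hV1 : Measurable fun ω => (fun i => (Λ1 ω (B i)).toReal : Fin n → ℝ) :=
    measurable_pi_lambda _ fun i => (hΛ1.1 _ (hB i).1).ennreal_toReal
  have hV2 : Measurable fun ω => (fun i => (Λ2 ω (B i)).toReal : Fin n → ℝ) :=
    measurable_pi_lambda _ fun i => (hΛ2.1 _ (hB i).1).ennreal_toReal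
  have hgV1 : Measurable fun ω => g (fun i => (Λ1 ω (B i)).toReal) := hgcont.measurable.comp hV1
  have hgV2 : Measurable fun ω => g (fun i => (Λ2 ω (B i)).toReal) := hgcont.measurable.comp hV2
  have hh1 : ∀ ω, (0:ℝ) ≤ g (fun i => (Λ1 ω (B i)).toReal) - g 0 := fun ω =>
    sub_nonneg.2 (hgmono fun i => ENNReal.toReal_nonneg)
  have hh2 : ∀ ω, (0:ℝ) ≤ g (fun i => (Λ2 ω (B i)).toReal) - g 0 := fun ω =>
    sub_nonneg.2 (hgmono fun i => ENNReal.toReal_nonneg)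
  have hS1nn : ∀ m ω, (0:ℝ) ≤ ∑ j, (sfC (χ m) j).toReal * ((Λ1 ω) (sfA (χ m) j)).toReal :=
    fun m ω => Finset.sum_nonneg fun j _ =>
      mul_nonneg ENNReal.toReal_nonneg ENNReal.toReal_nonneg
  have hS2nn : ∀ m ω, (0:ℝ) ≤ ∑ j, (sfC (χ m) j).toReal * ((Λ2 ω) (sfA (χ m) j)).toReal :=
    fun m ω => Finset.sum_nonneg fun j _ =>
      mul_nonneg ENNReal.toReal_nonneg ENNReal.toReal_nonneg
  have hTh1 : Integrable (fun ω => (∫⁻ x, F₀ x ∂(Λ1 ω)).toReal *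
      (g (fun i => (Λ1 ω (B i)).toReal) - g 0)) P :=
    (hint1.sub (facts1.tint.const_mul (g 0))).congr (Filter.Eventually.of_forall fun ω => by simp only [Pi.sub_apply]; ring)
  have hTh2 : Integrable (fun ω => (∫⁻ x, F₀ x ∂(Λ2 ω)).toReal *
      (g (fun i => (Λ2 ω (B i)).toReal) - g 0)) P :=
    (hint2.sub (facts2.tint.const_mul (g 0))).congr (Filter.Eventually.of_forall fun ω => by simp only [Pi.sub_apply]; ring)
  have hSh1 : ∀ m, Integrable (fun ω =>
      (∑ j, (sfC (χ m) j).toReal * ((Λ1 ω) (sfA (χ m) j)).toReal) *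
      (g (fun i => (Λ1 ω (B i)).toReal) - g 0)) P := by
    intro m
    refine hTh1.mono' ((facts1.smeas m).mul (hgV1.sub measurable_const)).aestronglyMeasurable ?_
    filter_upwards [facts1.sle m] with ω hω
    rw [Real.norm_eq_abs, abs_of_nonneg (mul_nonneg (hS1nn m ω) (hh1 ω))]
    exact mul_le_mul_of_nonneg_right hω (hh1 ω)
  have hSh2 : ∀ m, Integrable (fun ω =>
      (∑ j, (sfC (χ m) j).toReal * ((Λ2 ω) (sfA (χ m) j)).toReal) *
      (g (fun i => (Λ2 ω (B i)).toReal) - g 0)) P := by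
    intro m
    refine hTh2.mono' ((facts2.smeas m).mul (hgV2.sub measurable_const)).aestronglyMeasurable ?_
    filter_upwards [facts2.sle m] with ω hω
    rw [Real.norm_eq_abs, abs_of_nonneg (mul_nonneg (hS2nn m ω) (hh2 ω))]
    exact mul_le_mul_of_nonneg_right hω (hh2 ω)
  have hAbb : ∀ m (j1 : Fin (sfK (χ m))), BoundedBorel (sfA (χ m) j1) := by
    intro m j1
    refine ⟨sfA_measurable _ _, ?_⟩
    have hsub' : sfA (χ m) j1 ⊆ K m := by
      intro x hx
      apply hχsub m x
      have hx' : χ m x = sfC (χ m) j1 := hx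
      rw [hx']
      exact sfC_ne_zero _ _
    exact (K.isCompact m).of_isClosed_subset isClosed_closure
      (closure_minimal hsub' (K.isCompact m).isClosed)
  -- the key per-m inequality from the dcx order
  have step : ∀ m : ℕ,
      ∫ ω, (∑ j, (sfC (χ m) j).toReal * ((Λ1 ω) (sfA (χ m) j)).toReal) *
          (g (fun i => (Λ1 ω (B i)).toReal) - g 0) ∂P ≤
        ∫ ω, (∑ j, (sfC (χ m) j).toReal * ((Λ2 ω) (sfA (χ m) j)).toReal) *
          (g (fun i => (Λ2 ω (B i)).toReal) - g 0) ∂P := by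
    intro m
    set I : Fin (sfK (χ m) + n) → Set E :=
      fun j => Fin.addCases (fun j1 => sfA (χ m) j1) B j with hIdef
    set BIGF : (Fin (sfK (χ m) + n) → ℝ) → ℝ :=
      fun u => max (∑ j, (sfC (χ m) j).toReal * u (Fin.castAdd n j)) 0 *
        (g (fun i => max (u (Fin.natAdd (sfK (χ m)) i)) 0) - g 0) with hBIGF
    have hIbb : ∀ j, BoundedBorel (I j) := by
      intro j
      refine Fin.addCases (motive := fun j => BoundedBorel (I j)) (fun j1 => ?_) (fun i => ?_) j
      · simp only [hIdef, Fin.addCases_left]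
        exact hAbb m j1
      · simp only [hIdef, Fin.addCases_right]
        exact hB i
    have hFdcx : DcxCl _ BIGF :=
      blockF_dirCx _ (fun j => ENNReal.toReal_nonneg) hgmono hgdcx
    have happ : ∀ (Λ : Ω → Measure E) (ω : Ω),
        BIGF (fun i => (Λ ω (I i)).toReal)
        = (∑ j, (sfC (χ m) j).toReal * ((Λ ω) (sfA (χ m) j)).toReal) *
            (g (fun i => (Λ ω (B i)).toReal) - g 0) := by
      intro Λ ω
      rw [hBIGF]
      dsimp only
      congr 1
      · rw [max_eq_left]
        · refine Finset.sum_congr rfl fun j _ => ?_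
          simp only [hIdef, Fin.addCases_left]
        · refine Finset.sum_nonneg fun j _ => ?_
          exact mul_nonneg ENNReal.toReal_nonneg ENNReal.toReal_nonneg
      · congr 2
        funext i
        simp only [hIdef, Fin.addCases_right]
        exact max_eq_left ENNReal.toReal_nonneg
    have hre1 : (fun ω => BIGF (fun i => (Λ1 ω (I i)).toReal))
        = fun ω => (∑ j, (sfC (χ m) j).toReal * ((Λ1 ω) (sfA (χ m) j)).toReal) *
            (g (fun i => (Λ1 ω (B i)).toReal) - g 0) := funext fun ω => happ Λ1 ω
    have hre2 : (fun ω => BIGF (fun i => (Λ2 ω (I i)).toReal))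
        = fun ω => (∑ j, (sfC (χ m) j).toReal * ((Λ2 ω) (sfA (χ m) j)).toReal) *
            (g (fun i => (Λ2 ω (B i)).toReal) - g 0) := funext fun ω => happ Λ2 ω
    have hi1 : Integrable (fun ω => BIGF (fun i => (Λ1 ω (I i)).toReal)) P := by
      rw [hre1]; exact hSh1 m
    have hi2 : Integrable (fun ω => BIGF (fun i => (Λ2 ω (I i)).toReal)) P := by
      rw [hre2]; exact hSh2 m
    have h1 := hord (sfK (χ m) + n) I hIbb BIGF hFdcx hi1 hi2
    rw [hre1, hre2] at h1
    exact h1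
  -- equality of total masses
  have hA : ∫ ω, (∫⁻ x, F₀ x ∂(Λ1 ω)).toReal ∂P = ∫ ω, (∫⁻ x, F₀ x ∂(Λ2 ω)).toReal ∂P := by
    have eqm : ∀ m, ∫ ω, (∑ j, (sfC (χ m) j).toReal * ((Λ1 ω) (sfA (χ m) j)).toReal) ∂P
        = ∫ ω, (∑ j, (sfC (χ m) j).toReal * ((Λ2 ω) (sfA (χ m) j)).toReal) ∂P := by
      intro m
      have hlin : ∫ ω, (∑ j, (sfC (χ m) j).toReal * ((Λ1 ω) (sfA (χ m) j)).toReal) ∂P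
          ≤ ∫ ω, (∑ j, (sfC (χ m) j).toReal * ((Λ2 ω) (sfA (χ m) j)).toReal) ∂P :=
        hord (sfK (χ m)) (sfA (χ m)) (hAbb m)
          (fun w => ∑ j, (sfC (χ m) j).toReal * w j) (dirCx_linear _)
          (facts1.sint m) (facts2.sint m)
      have hlin2 : ∫ ω, -(∑ j, (sfC (χ m) j).toReal * ((Λ1 ω) (sfA (χ m) j)).toReal) ∂P
          ≤ ∫ ω, -(∑ j, (sfC (χ m) j).toReal * ((Λ2 ω) (sfA (χ m) j)).toReal) ∂P :=
        hord (sfK (χ m)) (sfA (χ m)) (hAbb m)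
          (fun w => -∑ j, (sfC (χ m) j).toReal * w j) (dirCx_neg_linear _)
          (facts1.sint m).neg (facts2.sint m).neg
      rw [integral_neg, integral_neg] at hlin2
      linarith
    have eqlm : ∀ m, ∫⁻ ω, ∫⁻ x, χ m x ∂(Λ1 ω) ∂P = ∫⁻ ω, ∫⁻ x, χ m x ∂(Λ2 ω) ∂P := by
      intro m
      rw [← facts1.slift m, ← facts2.slift m,
        ← ofReal_integral_eq_lintegral_ofReal (facts1.sint m)
          (Filter.Eventually.of_forall fun ω => hS1nn m ω),
        ← ofReal_integral_eq_lintegral_ofReal (facts2.sint m)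
          (Filter.Eventually.of_forall fun ω => hS2nn m ω),
        eqm m]
    have hdd : ∫⁻ ω, ∫⁻ x, F₀ x ∂(Λ1 ω) ∂P = ∫⁻ ω, ∫⁻ x, F₀ x ∂(Λ2 ω) ∂P := by
      rw [← facts1.tsup, ← facts2.tsup]
      exact iSup_congr eqlm
    rw [facts1.tre, facts2.tre, hdd]
  -- limits
  have hlim1 : Filter.Tendsto (fun m =>
      ∫ ω, (∑ j, (sfC (χ m) j).toReal * ((Λ1 ω) (sfA (χ m) j)).toReal) *
        (g (fun i => (Λ1 ω (B i)).toReal) - g 0) ∂P) Filter.atTop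
      (nhds (∫ ω, (∫⁻ x, F₀ x ∂(Λ1 ω)).toReal *
        (g (fun i => (Λ1 ω (B i)).toReal) - g 0) ∂P)) := by
    refine tendsto_integral_of_dominated_convergence
      (fun ω => (∫⁻ x, F₀ x ∂(Λ1 ω)).toReal * (g (fun i => (Λ1 ω (B i)).toReal) - g 0))
      (fun m => ((facts1.smeas m).mul (hgV1.sub measurable_const)).aestronglyMeasurable)
      hTh1 ?_ ?_
    · intro m
      filter_upwards [facts1.sle m] with ω hω
      rw [Real.norm_eq_abs, abs_of_nonneg (mul_nonneg (hS1nn m ω) (hh1 ω))]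
      exact mul_le_mul_of_nonneg_right hω (hh1 ω)
    · filter_upwards [facts1.stend] with ω hω
      exact hω.mul_const _
  have hlim2 : Filter.Tendsto (fun m =>
      ∫ ω, (∑ j, (sfC (χ m) j).toReal * ((Λ2 ω) (sfA (χ m) j)).toReal) *
        (g (fun i => (Λ2 ω (B i)).toReal) - g 0) ∂P) Filter.atTop
      (nhds (∫ ω, (∫⁻ x, F₀ x ∂(Λ2 ω)).toReal *
        (g (fun i => (Λ2 ω (B i)).toReal) - g 0) ∂P)) := by
    refine tendsto_integral_of_dominated_convergence
      (fun ω => (∫⁻ x, F₀ x ∂(Λ2 ω)).toReal * (g (fun i => (Λ2 ω (B i)).toReal) - g 0))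
      (fun m => ((facts2.smeas m).mul (hgV2.sub measurable_const)).aestronglyMeasurable)
      hTh2 ?_ ?_
    · intro m
      filter_upwards [facts2.sle m] with ω hω
      rw [Real.norm_eq_abs, abs_of_nonneg (mul_nonneg (hS2nn m ω) (hh2 ω))]
      exact mul_le_mul_of_nonneg_right hω (hh2 ω)
    · filter_upwards [facts2.stend] with ω hω
      exact hω.mul_const _
  have hBimp : ∫ ω, (∫⁻ x, F₀ x ∂(Λ1 ω)).toReal *
        (g (fun i => (Λ1 ω (B i)).toReal) - g 0) ∂P
      ≤ ∫ ω, (∫⁻ x, F₀ x ∂(Λ2 ω)).toReal *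
        (g (fun i => (Λ2 ω (B i)).toReal) - g 0) ∂P :=
    le_of_tendsto_of_tendsto' hlim1 hlim2 step
  -- final assembly
  have split1 : ∫ ω, (∫⁻ x, F₀ x ∂(Λ1 ω)).toReal * g (fun i => (Λ1 ω (B i)).toReal) ∂P
      = ∫ ω, (∫⁻ x, F₀ x ∂(Λ1 ω)).toReal * (g (fun i => (Λ1 ω (B i)).toReal) - g 0) ∂P
        + g 0 * ∫ ω, (∫⁻ x, F₀ x ∂(Λ1 ω)).toReal ∂P := by
    rw [← integral_const_mul, ← integral_add hTh1 (facts1.tint.const_mul (g 0))]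
    exact integral_congr_ae (Filter.Eventually.of_forall fun ω => by ring)
  have split2 : ∫ ω, (∫⁻ x, F₀ x ∂(Λ2 ω)).toReal * g (fun i => (Λ2 ω (B i)).toReal) ∂P
      = ∫ ω, (∫⁻ x, F₀ x ∂(Λ2 ω)).toReal * (g (fun i => (Λ2 ω (B i)).toReal) - g 0) ∂P
        + g 0 * ∫ ω, (∫⁻ x, F₀ x ∂(Λ2 ω)).toReal ∂P := by
    rw [← integral_const_mul, ← integral_add hTh2 (facts2.tint.const_mul (g 0))]
    exact integral_congr_ae (Filter.Eventually.of_forall fun ω => by ring)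
  rw [split1, split2]
  have hgc : g 0 * ∫ ω, (∫⁻ x, F₀ x ∂(Λ1 ω)).toReal ∂P
      = g 0 * ∫ ω, (∫⁻ x, F₀ x ∂(Λ2 ω)).toReal ∂P := by rw [hA]
  linarith
end

section
/- Let Φ1 and Φ2 be random measures (in particular, point processes) on a locally compact second countable Hausdorff space E with Φ1 ≤_idcv Φ2. Then the void probabilities are ordered: for every m and all Borel sets A_1,…,A_m ⊆ E, P(Φ1(A_i) = 0 for all i = 1,…,m) ≥ P(Φ2(A_i) = 0 for all i = 1,…,m). Consequently, for any index set S and any function h : E × S → ℝ measurable in its first argument, the extremal shot-noise fields U_{Φ_i}(y) = sup over the atoms x of Φ_i of h(x,y) satisfy {U_{Φ1}(y)}_{y∈S} ≤_lo {U_{Φ2}(y)}_{y∈S}, i.e., P(U_{Φ1}(y_j) ≤ a_j, j = 1,…,m) ≥ P(U_{Φ2}(y_j) ≤ a_j, j = 1,…,m) for all y_1,…,y_m ∈ S and a_1,…,a_m ∈ ℝ, since U_Φ(y) ≤ a if and only if Φ({x : h(x,y) > a}) = 0. -/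
open MeasureTheory ENNReal

/-- The extremal shot-noise field `U_Φ(y) = sup_{x atom of Φ} h(x,y)`, with values in `EReal`
(`⊥` if there are no atoms). -/
noncomputable def extremalSN {E S : Type*} [TopologicalSpace E] [MeasurableSpace E]
    (Φ : Measure E) (h : E → S → ℝ) (y : S) : EReal :=
  ⨆ (x : E) (_ : Φ {x} ≠ 0), ((h x y : ℝ) : EReal)

open Filter in
lemma key1d (k a b s t : ℝ) (hk : 0 ≤ k) (has : a ≤ s) (hsb : s ≤ b)
    (hat : a ≤ t) (htb : t ≤ b) (hsum : s + t = a + b) :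
    min (k * a) 1 + min (k * b) 1 ≤ min (k * s) 1 + min (k * t) 1 := by
  rcases le_total (k * s) 1 with h1 | h1 <;> rcases le_total (k * t) 1 with h2 | h2 <;>
    rcases le_total (k * a) 1 with h3 | h3 <;> rcases le_total (k * b) 1 with h4 | h4 <;>
    simp only [min_eq_left, min_eq_right, h1, h2, h3, h4] <;>
    nlinarith [mul_nonneg hk (sub_nonneg.2 has), mul_nonneg hk (sub_nonneg.2 hsb),
      mul_nonneg hk (sub_nonneg.2 hat), mul_nonneg hk (sub_nonneg.2 htb)]


lemma fk_idcv (m k : ℕ) : IdcvCl m (fun x => min ((k : ℝ) * ∑ i, x i) 1) := by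
  constructor
  · intro x y hxy
    have : (∑ i, x i) ≤ ∑ i, y i := Finset.sum_le_sum fun i _ => hxy i
    exact min_le_min (mul_le_mul_of_nonneg_left this (by positivity)) le_rfl
  · intro x y p q hpx hxq hpy hyq hsum
    have hs : ∀ u v : Fin m → ℝ, u ≤ v → (∑ i, u i) ≤ ∑ i, v i :=
      fun u v h => Finset.sum_le_sum fun i _ => h i
    have hse : (∑ i, x i) + ∑ i, y i = (∑ i, p i) + ∑ i, q i := by
      rw [← Finset.sum_add_distrib, ← Finset.sum_add_distrib]
      exact Finset.sum_congr rfl fun i _ => congrFun hsum i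
    exact key1d _ _ _ _ _ (by positivity) (hs _ _ hpx) (hs _ _ hxq) (hs _ _ hpy)
      (hs _ _ hyq) hse

open Filter in
lemma tendsto_fk {Ω : Type*} [MeasurableSpace Ω] (P : Measure Ω) [IsProbabilityMeasure P]
    {m : ℕ} (X : Ω → Fin m → ℝ) (hX : ∀ i, Measurable fun ω => X ω i)
    (hnn : ∀ ω i, 0 ≤ X ω i) :
    Tendsto (fun k : ℕ => ∫ ω, min ((k : ℝ) * ∑ i, X ω i) 1 ∂P) atTop
      (nhds ((P {ω | ∀ i, X ω i = 0}ᶜ).toReal)) := by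
  have hmeasG : MeasurableSet {ω | ∀ i, X ω i = 0} := by
    have : {ω | ∀ i, X ω i = 0} = ⋂ i, (fun ω => X ω i) ⁻¹' {0} := by
      ext ω; simp
    rw [this]
    exact MeasurableSet.iInter fun i => (hX i) (measurableSet_singleton 0)
  have hSmeas : Measurable fun ω => ∑ i, X ω i := by
    exact Finset.measurable_sum _ fun i _ => hX i
  have hmeasfk : ∀ k : ℕ, Measurable fun ω => min ((k : ℝ) * ∑ i, X ω i) 1 :=
    fun k => ((hSmeas.const_mul _).min measurable_const)
  have := MeasureTheory.integral_indicator_one (μ := P) hmeasG.compl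
  rw [← measureReal_def, ← this]
  apply tendsto_integral_of_dominated_convergence (bound := fun _ => (1 : ℝ))
  · exact fun k => (hmeasfk k).aestronglyMeasurable
  · exact integrable_const 1
  · intro k
    refine ae_of_all _ fun ω => ?_
    have h0 : 0 ≤ (k : ℝ) * ∑ i, X ω i := by
      have : 0 ≤ ∑ i, X ω i := Finset.sum_nonneg fun i _ => hnn ω i
      positivity
    rw [Real.norm_eq_abs, abs_of_nonneg (le_min h0 zero_le_one)]
    exact min_le_right _ _
  · refine ae_of_all _ fun ω => ?_
    by_cases hω : ∀ i, X ω i = 0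
    · have hz : (∑ i, X ω i) = 0 := Finset.sum_eq_zero fun i _ => hω i
      have : ({ω | ∀ i, X ω i = 0}ᶜ : Set Ω).indicator (1 : Ω → ℝ) ω = 0 := by
        simp [Set.indicator_of_notMem, hω]
      rw [this]
      simp [hz]
    · have : ({ω | ∀ i, X ω i = 0}ᶜ : Set Ω).indicator (1 : Ω → ℝ) ω = 1 := by
        simp [Set.indicator_of_mem, hω]
      rw [this]
      push_neg at hω
      obtain ⟨i, hi⟩ := hω
      have hpos : 0 < ∑ j, X ω j := by
        have h1 : X ω i ≤ ∑ j, X ω j :=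
          Finset.single_le_sum (fun j _ => hnn ω j) (Finset.mem_univ i)
        have := lt_of_le_of_ne (hnn ω i) (Ne.symm hi)
        linarith
      have hev : ∀ᶠ k : ℕ in atTop, min ((k : ℝ) * ∑ j, X ω j) 1 = 1 := by
        have : Tendsto (fun k : ℕ => (k : ℝ) * ∑ j, X ω j) atTop atTop :=
          tendsto_natCast_atTop_atTop.atTop_mul_const hpos
        filter_upwards [this.eventually_ge_atTop 1] with k hk
        exact min_eq_right hk
      exact Tendsto.congr' (by filter_upwards [hev] with k hk; exact hk.symm) tendsto_const_nhds

open Filter in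
lemma void_bounded {Ω E : Type*} [MeasurableSpace Ω] (P : Measure Ω) [IsProbabilityMeasure P]
    [TopologicalSpace E] [MeasurableSpace E] (Φ1 Φ2 : Ω → Measure E)
    (hm1 : ∀ B : Set E, MeasurableSet B → Measurable fun ω => Φ1 ω B)
    (hm2 : ∀ B : Set E, MeasurableSet B → Measurable fun ω => Φ2 ω B)
    {m : ℕ} (B : Fin m → Set E) (hB : ∀ i, MeasurableSet (B i))
    (hfin1 : ∀ ω i, Φ1 ω (B i) ≠ ⊤) (hfin2 : ∀ ω i, Φ2 ω (B i) ≠ ⊤)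
    (hVO : VecOrd IdcvCl P (fun ω i => (Φ1 ω (B i)).toReal) (fun ω i => (Φ2 ω (B i)).toReal)) :
    P {ω | ∀ i, Φ2 ω (B i) = 0} ≤ P {ω | ∀ i, Φ1 ω (B i) = 0} := by
  set X : Ω → Fin m → ℝ := fun ω i => (Φ1 ω (B i)).toReal with hXdef
  set Y : Ω → Fin m → ℝ := fun ω i => (Φ2 ω (B i)).toReal with hYdef
  have hXmeas : ∀ i, Measurable fun ω => X ω i := fun i => (hm1 _ (hB i)).ennreal_toReal
  have hYmeas : ∀ i, Measurable fun ω => Y ω i := fun i => (hm2 _ (hB i)).ennreal_toReal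
  have hXnn : ∀ ω i, 0 ≤ X ω i := fun ω i => ENNReal.toReal_nonneg
  have hYnn : ∀ ω i, 0 ≤ Y ω i := fun ω i => ENNReal.toReal_nonneg
  have hGX : {ω | ∀ i, Φ1 ω (B i) = 0} = {ω | ∀ i, X ω i = 0} := by
    ext ω
    simp only [Set.mem_setOf_eq, hXdef, ENNReal.toReal_eq_zero_iff]
    exact ⟨fun h i => Or.inl (h i), fun h i => (h i).resolve_right (hfin1 ω i)⟩
  have hGY : {ω | ∀ i, Φ2 ω (B i) = 0} = {ω | ∀ i, Y ω i = 0} := by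
    ext ω
    simp only [Set.mem_setOf_eq, hYdef, ENNReal.toReal_eq_zero_iff]
    exact ⟨fun h i => Or.inl (h i), fun h i => (h i).resolve_right (hfin2 ω i)⟩
  -- integrability
  have hint : ∀ (Z : Ω → Fin m → ℝ), (∀ i, Measurable fun ω => Z ω i) → (∀ ω i, 0 ≤ Z ω i) →
      ∀ k : ℕ, Integrable (fun ω => min ((k : ℝ) * ∑ i, Z ω i) 1) P := by
    intro Z hZ hZnn k
    have hmeas : Measurable fun ω => min ((k : ℝ) * ∑ i, Z ω i) 1 :=
      ((Finset.measurable_sum _ fun i _ => hZ i).const_mul _).min measurable_const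
    refine (integrable_const (1 : ℝ)).mono' hmeas.aestronglyMeasurable (ae_of_all _ fun ω => ?_)
    have h0 : 0 ≤ (k : ℝ) * ∑ i, Z ω i := by
      have : 0 ≤ ∑ i, Z ω i := Finset.sum_nonneg fun i _ => hZnn ω i
      positivity
    rw [Real.norm_eq_abs, abs_of_nonneg (le_min h0 zero_le_one)]
    exact min_le_right _ _
  have hle : ∀ k : ℕ, ∫ ω, min ((k : ℝ) * ∑ i, X ω i) 1 ∂P ≤
      ∫ ω, min ((k : ℝ) * ∑ i, Y ω i) 1 ∂P := fun k =>
    hVO _ (fk_idcv m k) (hint X hXmeas hXnn k) (hint Y hYmeas hYnn k)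
  have hlim : (P {ω | ∀ i, X ω i = 0}ᶜ).toReal ≤ (P {ω | ∀ i, Y ω i = 0}ᶜ).toReal :=
    le_of_tendsto_of_tendsto' (tendsto_fk P X hXmeas hXnn) (tendsto_fk P Y hYmeas hYnn) hle
  have hc : P {ω | ∀ i, X ω i = 0}ᶜ ≤ P {ω | ∀ i, Y ω i = 0}ᶜ :=
    (ENNReal.toReal_le_toReal (measure_ne_top _ _) (measure_ne_top _ _)).mp hlim
  rw [hGX, hGY]
  have hmX : MeasurableSet {ω | ∀ i, X ω i = 0} := by
    have : {ω | ∀ i, X ω i = 0} = ⋂ i, (fun ω => X ω i) ⁻¹' {0} := by ext ω; simp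
    rw [this]; exact MeasurableSet.iInter fun i => (hXmeas i) (measurableSet_singleton 0)
  have hmY : MeasurableSet {ω | ∀ i, Y ω i = 0} := by
    have : {ω | ∀ i, Y ω i = 0} = ⋂ i, (fun ω => Y ω i) ⁻¹' {0} := by ext ω; simp
    rw [this]; exact MeasurableSet.iInter fun i => (hYmeas i) (measurableSet_singleton 0)
  rw [prob_compl_eq_one_sub hmX, prob_compl_eq_one_sub hmY] at hc
  exact (ENNReal.sub_le_sub_iff_left prob_le_one one_ne_top).mp hc

/-- If `Φ1 ≤_idcv Φ2` then void probabilities are ordered: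
`P(Φ1(A_i) = 0 ∀i) ≥ P(Φ2(A_i) = 0 ∀i)` for all Borel `A_1,…,A_m`; consequently the extremal
shot-noise fields are ordered in the lower orthant order:
`P(U_{Φ1}(y_j) ≤ a_j ∀j) ≥ P(U_{Φ2}(y_j) ≤ a_j ∀j)`. -/
theorem void_probabilities_and_extremal_sn
    {Ω : Type*} [MeasurableSpace Ω] (P : Measure Ω) [IsProbabilityMeasure P]
    {E : Type*} [TopologicalSpace E] [LocallyCompactSpace E] [SecondCountableTopology E]
    [T2Space E] [MeasurableSpace E] [BorelSpace E]
    {S : Type*}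
    (Φ1 Φ2 : Ω → Measure E) (hΦ1 : IsRandomMeasure Φ1) (hΦ2 : IsRandomMeasure Φ2)
    -- each realization is purely atomic (a point measure): a Borel set is null iff it
    -- contains no atoms
    (hpure1 : ∀ ω, ∀ B : Set E, MeasurableSet B → (Φ1 ω B = 0 ↔ ∀ x ∈ B, Φ1 ω {x} = 0))
    (hpure2 : ∀ ω, ∀ B : Set E, MeasurableSet B → (Φ2 ω B = 0 ↔ ∀ x ∈ B, Φ2 ω {x} = 0))
    (h : E → S → ℝ) (hmeas : ∀ y : S, Measurable fun x => h x y)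
    (hord : RMOrd IdcvCl P Φ1 Φ2) :
    (∀ (m : ℕ) (A : Fin m → Set E), (∀ i, MeasurableSet (A i)) →
      P {ω | ∀ i, Φ2 ω (A i) = 0} ≤ P {ω | ∀ i, Φ1 ω (A i) = 0}) ∧
    (∀ (m : ℕ) (y : Fin m → S) (a : Fin m → ℝ),
      P {ω | ∀ j, extremalSN (Φ2 ω) h (y j) ≤ (a j : EReal)} ≤
        P {ω | ∀ j, extremalSN (Φ1 ω) h (y j) ≤ (a j : EReal)}) := by
  classical
  obtain ⟨K⟩ : Nonempty (CompactExhaustion E) := inferInstance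
  have part1 : ∀ (m : ℕ) (A : Fin m → Set E), (∀ i, MeasurableSet (A i)) →
      P {ω | ∀ i, Φ2 ω (A i) = 0} ≤ P {ω | ∀ i, Φ1 ω (A i) = 0} := by
    intro m A hA
    set Bn : ℕ → Fin m → Set E := fun n i => A i ∩ K n with hBndef
    have hBmeas : ∀ n i, MeasurableSet (Bn n i) := fun n i =>
      (hA i).inter (K.isCompact n).isClosed.measurableSet
    have hBbdd : ∀ n i, BoundedBorel (Bn n i) := by
      intro n i
      refine ⟨hBmeas n i, (K.isCompact n).of_isClosed_subset isClosed_closure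
        (closure_minimal Set.inter_subset_right (K.isCompact n).isClosed)⟩
    have hfin : ∀ (Φ : Ω → Measure E), IsRandomMeasure Φ → ∀ ω n i, Φ ω (Bn n i) ≠ ⊤ := by
      intro Φ hΦ ω n i
      exact ((measure_mono Set.inter_subset_right).trans_lt (hΦ.2 ω _ (K.isCompact n))).ne
    have hstep : ∀ n : ℕ, P {ω | ∀ i, Φ2 ω (Bn n i) = 0} ≤ P {ω | ∀ i, Φ1 ω (Bn n i) = 0} := by
      intro n
      exact void_bounded P Φ1 Φ2 hΦ1.1 hΦ2.1 (Bn n) (hBmeas n)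
        (fun ω i => hfin Φ1 hΦ1 ω n i) (fun ω i => hfin Φ2 hΦ2 ω n i)
        (hord m (Bn n) (hBbdd n))
    have hiff : ∀ (Φ : Ω → Measure E) (ω : Ω),
        (∀ i, Φ ω (A i) = 0) ↔ ∀ n, ∀ i, Φ ω (Bn n i) = 0 := by
      intro Φ ω
      constructor
      · intro h n i
        exact measure_mono_null Set.inter_subset_left (h i)
      · intro h i
        have hsub : A i ⊆ ⋃ n, Bn n i := by
          intro x hx
          have : x ∈ ⋃ n, (K n : Set E) := by rw [K.iUnion_eq]; trivial
          obtain ⟨_, ⟨n, rfl⟩, hn⟩ := this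
          exact Set.mem_iUnion.2 ⟨n, hx, hn⟩
        exact measure_mono_null hsub (measure_iUnion_null fun n => h n i)
    have hG1 : {ω | ∀ i, Φ1 ω (A i) = 0} = ⋂ n, {ω | ∀ i, Φ1 ω (Bn n i) = 0} := by
      ext ω; simpa using hiff Φ1 ω
    have hG2 : {ω | ∀ i, Φ2 ω (A i) = 0} = ⋂ n, {ω | ∀ i, Φ2 ω (Bn n i) = 0} := by
      ext ω; simpa using hiff Φ2 ω
    rw [hG1, hG2]
    have hmeasn : ∀ n, MeasurableSet {ω | ∀ i, Φ1 ω (Bn n i) = 0} := by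
      intro n
      have : {ω | ∀ i, Φ1 ω (Bn n i) = 0} = ⋂ i, (fun ω => Φ1 ω (Bn n i)) ⁻¹' {0} := by
        ext ω; simp
      rw [this]
      exact MeasurableSet.iInter fun i => (hΦ1.1 _ (hBmeas n i)) (measurableSet_singleton 0)
    have hanti : Antitone fun n => {ω | ∀ i, Φ1 ω (Bn n i) = 0} := by
      intro n n' hnn' ω hω i
      exact measure_mono_null (Set.inter_subset_inter_right _ (K.subset hnn')) (hω i)
    have hdir : Directed (fun x1 x2 => x1 ⊇ x2) fun n => {ω | ∀ i, Φ1 ω (Bn n i) = 0} :=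
      fun a b => ⟨max a b, hanti (le_max_left a b), hanti (le_max_right a b)⟩
    rw [Directed.measure_iInter (fun n => (hmeasn n).nullMeasurableSet) hdir
      ⟨0, measure_ne_top _ _⟩]
    refine le_iInf fun n => le_trans ?_ (hstep n)
    exact measure_mono (Set.iInter_subset _ n)
  refine ⟨part1, ?_⟩
  intro m y a
  set A : Fin m → Set E := fun j => {x | a j < h x (y j)} with hAdef
  have hAmeas : ∀ j, MeasurableSet (A j) :=
    fun j => measurableSet_lt measurable_const (hmeas (y j))
  have hiff : ∀ (Φ : Ω → Measure E), (∀ ω B, MeasurableSet B →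
        (Φ ω B = 0 ↔ ∀ x ∈ B, Φ ω {x} = 0)) → ∀ ω j,
      (extremalSN (Φ ω) h (y j) ≤ (a j : EReal) ↔ Φ ω (A j) = 0) := by
    intro Φ hpure ω j
    rw [hpure ω (A j) (hAmeas j), extremalSN, iSup₂_le_iff]
    constructor
    · intro hs x hx
      by_contra hne
      exact absurd (EReal.coe_le_coe_iff.mp (hs x hne)) (not_le.2 hx)
    · intro hs x hx
      by_contra hgt
      exact hx (hs x (not_le.mp fun hle => hgt (EReal.coe_le_coe_iff.mpr hle)))
  have e1 : {ω | ∀ j, extremalSN (Φ1 ω) h (y j) ≤ (a j : EReal)} =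
      {ω | ∀ j, Φ1 ω (A j) = 0} := by
    ext ω; simp only [Set.mem_setOf_eq]
    exact forall_congr' fun j => hiff Φ1 hpure1 ω j
  have e2 : {ω | ∀ j, extremalSN (Φ2 ω) h (y j) ≤ (a j : EReal)} =
      {ω | ∀ j, Φ2 ω (A j) = 0} := by
    ext ω; simp only [Set.mem_setOf_eq]
    exact forall_congr' fun j => hiff Φ2 hpure2 ω j
  rw [e1, e2]
  exact part1 m A hAmeas
end

section
/- Let a > 0 and c ≥ 1. Let N_{ca} be a Poisson random variable with mean ca and N_a a Poisson random variable with mean a. Then N_{ca} ≤_cx c·N_a: for every convex function f : ℝ → ℝ such that both expectations are finite, E[f(N_{ca})] ≤ E[f(c·N_a)]. -/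
open MeasureTheory

open Finset


noncomputable def pois (l : ℝ) (k : ℕ) : ℝ := Real.exp (-l) * l ^ k / (k.factorial : ℝ)

lemma tsum_pow_div_factorial (x : ℝ) :
    ∑' n : ℕ, x ^ n / (n.factorial : ℝ) = Real.exp x := by
  rw [Real.exp_eq_exp_ℝ, NormedSpace.exp_eq_tsum_div]

lemma pois_nonneg {l : ℝ} (hl : 0 ≤ l) (k : ℕ) : 0 ≤ pois l k := by
  unfold pois; positivity

lemma summable_pois (l : ℝ) : Summable (pois l) := by
  unfold pois
  simpa [mul_div_assoc] using (Real.summable_pow_div_factorial l).mul_left (Real.exp (-l))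

lemma tsum_pois (l : ℝ) : ∑' k, pois l k = 1 := by
  unfold pois
  simp only [mul_div_assoc]
  rw [tsum_mul_left, tsum_pow_div_factorial, ← Real.exp_add]
  simp

lemma pois_succ (l : ℝ) (k : ℕ) : ((k+1 : ℕ) : ℝ) * pois l (k+1) = l * pois l k := by
  unfold pois
  rw [Nat.factorial_succ, pow_succ]
  push_cast
  have h1 : (k.factorial : ℝ) ≠ 0 := Nat.cast_ne_zero.mpr k.factorial_ne_zero
  have h2 : ((k : ℝ) + 1) ≠ 0 := by positivity
  field_simp

lemma summable_mul_pois (l : ℝ) : Summable (fun k : ℕ => (k : ℝ) * pois l k) := by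
  rw [← summable_nat_add_iff 1]
  exact ((summable_pois l).mul_left l).congr fun n => (pois_succ l n).symm

lemma tsum_mul_pois (l : ℝ) : ∑' k : ℕ, (k : ℝ) * pois l k = l := by
  rw [Summable.tsum_eq_zero_add (summable_mul_pois l)]
  simp only [Nat.cast_zero, zero_mul, zero_add]
  have : (fun n : ℕ => ((n + 1 : ℕ) : ℝ) * pois l (n + 1)) = fun n => l * pois l n := by
    funext n; exact pois_succ l n
  push_cast at this ⊢
  rw [show (fun n : ℕ => ((n : ℝ) + 1) * pois l (n + 1)) = fun n => l * pois l n from this]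
  rw [tsum_mul_left, tsum_pois, mul_one]

noncomputable def binom (c : ℝ) (s j : ℕ) : ℝ :=
  (s.choose j : ℝ) * c⁻¹ ^ j * (1 - c⁻¹) ^ (s - j)

lemma binom_nonneg {c : ℝ} (hc : 1 ≤ c) (s j : ℕ) : 0 ≤ binom c s j := by
  have h0 : (0:ℝ) < c := lt_of_lt_of_le one_pos hc
  have h1 : c⁻¹ ≤ 1 := by rw [inv_le_one_iff₀]; right; exact hc
  have h2 : (0:ℝ) ≤ c⁻¹ := by positivity
  unfold binom
  have : (0:ℝ) ≤ 1 - c⁻¹ := by linarith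
  positivity

lemma binom_eq_zero {c : ℝ} {s j : ℕ} (h : s < j) : binom c s j = 0 := by
  unfold binom
  rw [Nat.choose_eq_zero_of_lt h]
  simp

lemma binom_sum (c : ℝ) (s : ℕ) : ∑ j ∈ range (s + 1), binom c s j = 1 := by
  have h := add_pow c⁻¹ (1 - c⁻¹) s
  simp only [add_sub_cancel, one_pow] at h
  conv_rhs => rw [h]
  apply Finset.sum_congr rfl
  intro j _
  unfold binom
  ring

lemma binom_mean {c : ℝ} (hc : 1 ≤ c) (s : ℕ) :
    ∑ j ∈ range (s + 1), binom c s j * (c * j) = s := by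
  have hc0 : (0:ℝ) < c := lt_of_lt_of_le one_pos hc
  have hcc : c⁻¹ * c = 1 := inv_mul_cancel₀ hc0.ne'
  cases s with
  | zero => simp
  | succ t =>
    rw [Finset.sum_range_succ']
    simp only [Nat.cast_zero, mul_zero, add_zero]
    have key : ∀ i : ℕ, binom c (t+1) (i+1) * (c * ((i:ℝ)+1)) = ((t:ℝ)+1) * binom c t i := by
      intro i
      unfold binom
      have hch : ((t:ℝ) + 1) * (t.choose i : ℝ) = ((t+1).choose (i+1) : ℝ) * ((i:ℝ) + 1) := by
        exact_mod_cast congrArg (Nat.cast (R := ℝ)) (Nat.add_one_mul_choose_eq t i)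
      have hsub : t + 1 - (i + 1) = t - i := by omega
      rw [hsub, pow_succ]
      linear_combination (((t+1).choose (i+1) : ℝ) * c⁻¹^i * (1-c⁻¹)^(t-i) * ((i:ℝ)+1)) * hcc
        - (c⁻¹^i * (1-c⁻¹)^(t-i)) * hch
    push_cast
    calc ∑ i ∈ range (t+1), binom c (t+1) (i+1) * (c * ((i:ℝ)+1))
        = ∑ i ∈ range (t+1), ((t:ℝ)+1) * binom c t i := Finset.sum_congr rfl fun i _ => key i
      _ = ((t:ℝ)+1) * ∑ i ∈ range (t+1), binom c t i := by rw [Finset.mul_sum]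
      _ = (t:ℝ)+1 := by rw [binom_sum, mul_one]

lemma pois_binom_shift {a c : ℝ} (hc : 1 ≤ c) (j m : ℕ) :
    pois (c*a) (m+j) * binom c (m+j) j
      = pois a j * (Real.exp (a - c*a) * (c*a - a)^m / m.factorial) := by
  have hc0 : (0:ℝ) < c := lt_of_lt_of_le one_pos hc
  have h1 : ((m+j).choose j * j.factorial * m.factorial : ℕ) = (m+j).factorial := by
    simpa [Nat.add_sub_cancel] using Nat.choose_mul_factorial_mul_factorial (Nat.le_add_left j m)
  have hjf : (j.factorial : ℝ) ≠ 0 := Nat.cast_ne_zero.mpr j.factorial_ne_zero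
  have hmf : (m.factorial : ℝ) ≠ 0 := Nat.cast_ne_zero.mpr m.factorial_ne_zero
  have hC : ((m+j).choose j : ℝ) = ((m+j).factorial : ℝ) / ((j.factorial : ℝ) * (m.factorial : ℝ)) := by
    rw [eq_div_iff (mul_ne_zero hjf hmf)]
    push_cast [← h1]
    ring
  have hexp : Real.exp (-(c*a)) = Real.exp (-a) * Real.exp (a - c*a) := by
    rw [← Real.exp_add]; congr 1; ring
  have hq : (1 - c⁻¹) = (c - 1) / c := by field_simp
  have hd : (c*a - a) = a * (c - 1) := by ring
  have hmjf : ((m+j).factorial : ℝ) ≠ 0 := Nat.cast_ne_zero.mpr (m+j).factorial_ne_zero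
  unfold pois binom
  rw [Nat.add_sub_cancel, hC, hexp, hq, hd, mul_pow, div_pow]
  field_simp
  rw [show (a*(c-1))^m = a^m*(c-1)^m from mul_pow a (c-1) m]
  have hcj : c ^ j * c⁻¹ ^ j = 1 := by rw [← mul_pow, mul_inv_cancel₀ hc0.ne', one_pow]
  linear_combination (c ^ m * a ^ m * a ^ j * (-1 + c) ^ m) * hcj

lemma summable_pois_binom {a c : ℝ} (hc : 1 ≤ c) (j : ℕ) :
    Summable (fun s : ℕ => pois (c*a) s * binom c s j) := by
  have hsum2 : Summable (fun m : ℕ => pois a j * (Real.exp (a - c*a) * (c*a-a)^m / m.factorial)) := by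
    apply Summable.mul_left
    have := (Real.summable_pow_div_factorial (c*a-a)).mul_left (Real.exp (a - c*a))
    exact this.congr fun m => by rw [mul_div_assoc]
  exact (summable_nat_add_iff j).mp (hsum2.congr fun m => (pois_binom_shift hc j m).symm)

lemma tsum_pois_binom {a c : ℝ} (hc : 1 ≤ c) (j : ℕ) :
    ∑' s : ℕ, pois (c*a) s * binom c s j = pois a j := by
  have hsummable := summable_pois_binom (a := a) hc j
  rw [← Summable.sum_add_tsum_nat_add j hsummable]
  have hzero : ∑ i ∈ range j, pois (c*a) i * binom c i j = 0 := by
    apply Finset.sum_eq_zero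
    intro i hi
    rw [binom_eq_zero (Finset.mem_range.mp hi), mul_zero]
  rw [hzero, zero_add]
  have : ∀ m : ℕ, pois (c*a) (m+j) * binom c (m+j) j
      = pois a j * (Real.exp (a - c*a) * ((c*a-a)^m / m.factorial)) := by
    intro m
    rw [pois_binom_shift hc j m, mul_div_assoc]
  rw [tsum_congr this, tsum_mul_left, tsum_mul_left, tsum_pow_div_factorial, ← Real.exp_add]
  simp

open scoped ENNReal

lemma jensen_step {c : ℝ} (hc : 1 ≤ c) {g : ℝ → ℝ} (hg : ConvexOn ℝ Set.univ g) (s : ℕ) :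
    g (s : ℝ) ≤ ∑ j ∈ range (s + 1), binom c s j * g (c * j) := by
  have h1 : ((s : ℕ) : ℝ) = ∑ j ∈ range (s + 1), binom c s j • (c * (j : ℝ)) := by
    simp only [smul_eq_mul]
    exact (binom_mean hc s).symm
  calc g (s : ℝ) = g (∑ j ∈ range (s + 1), binom c s j • (c * (j : ℝ))) := by rw [← h1]
    _ ≤ ∑ j ∈ range (s + 1), binom c s j • g (c * (j : ℝ)) := by
        apply hg.map_sum_le (fun j _ => binom_nonneg hc s j) (binom_sum c s)
          (fun j _ => Set.mem_univ _)
    _ = ∑ j ∈ range (s + 1), binom c s j * g (c * j) := by simp [smul_eq_mul]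

lemma key_lintegral_le {a c : ℝ} (ha : 0 < a) (hc : 1 ≤ c) {g : ℝ → ℝ}
    (hg : ConvexOn ℝ Set.univ g) (hgpos : ∀ x : ℝ, 0 ≤ x → 0 ≤ g x) :
    ∑' s : ℕ, ENNReal.ofReal (g s) * ENNReal.ofReal (pois (c*a) s)
      ≤ ∑' j : ℕ, ENNReal.ofReal (g (c*j)) * ENNReal.ofReal (pois a j) := by
  have hc0 : (0:ℝ) < c := lt_of_lt_of_le one_pos hc
  have hgc : ∀ j : ℕ, 0 ≤ g (c * j) := fun j => hgpos _ (by positivity)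
  -- F s j
  set F : ℕ → ℕ → ℝ≥0∞ :=
    fun s j => ENNReal.ofReal (pois (c*a) s) * ENNReal.ofReal (binom c s j * g (c*j)) with hF
  have step1 : ∀ s : ℕ, ENNReal.ofReal (g s) * ENNReal.ofReal (pois (c*a) s) = ∑' j : ℕ, F s j → True := fun _ _ => trivial
  have hle1 : ∀ s : ℕ, ENNReal.ofReal (g s) * ENNReal.ofReal (pois (c*a) s) ≤ ∑' j : ℕ, F s j := by
    intro s
    have hJ : ENNReal.ofReal (g s) ≤ ∑' j : ℕ, ENNReal.ofReal (binom c s j * g (c*j)) := by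
      have : ∑' j : ℕ, ENNReal.ofReal (binom c s j * g (c*j))
          = ∑ j ∈ range (s+1), ENNReal.ofReal (binom c s j * g (c*j)) := by
        apply tsum_eq_sum
        intro j hj
        rw [binom_eq_zero (by simpa using hj), zero_mul, ENNReal.ofReal_zero]
      rw [this, ← ENNReal.ofReal_sum_of_nonneg
        (fun j _ => mul_nonneg (binom_nonneg hc s j) (hgc j))]
      exact ENNReal.ofReal_le_ofReal (jensen_step hc hg s)
    calc ENNReal.ofReal (g s) * ENNReal.ofReal (pois (c*a) s)
        ≤ (∑' j : ℕ, ENNReal.ofReal (binom c s j * g (c*j))) * ENNReal.ofReal (pois (c*a) s) :=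
          mul_le_mul_left hJ _
      _ = ∑' j : ℕ, F s j := by
          rw [← ENNReal.tsum_mul_right]
          exact tsum_congr fun j => by rw [hF, mul_comm]
  calc ∑' s : ℕ, ENNReal.ofReal (g s) * ENNReal.ofReal (pois (c*a) s)
      ≤ ∑' s : ℕ, ∑' j : ℕ, F s j := ENNReal.tsum_le_tsum hle1
    _ = ∑' j : ℕ, ∑' s : ℕ, F s j := ENNReal.tsum_comm
    _ = ∑' j : ℕ, ENNReal.ofReal (g (c*j)) * ENNReal.ofReal (pois a j) := by
        apply tsum_congr
        intro j
        have h1 : ∀ s : ℕ, F s j = ENNReal.ofReal (pois (c*a) s * binom c s j) * ENNReal.ofReal (g (c*j)) := by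
          intro s
          simp only [hF]
          rw [ENNReal.ofReal_mul (binom_nonneg hc s j),
            ENNReal.ofReal_mul (pois_nonneg (by positivity) s)]
          ring
        rw [tsum_congr h1, ENNReal.tsum_mul_right,
          ← ENNReal.ofReal_tsum_of_nonneg
          (fun s => mul_nonneg (pois_nonneg (by positivity) s) (binom_nonneg hc s j))
          (summable_pois_binom hc j), tsum_pois_binom hc j, mul_comm]

lemma integral_comp_nat {Ω : Type*} [MeasurableSpace Ω] (P : Measure Ω) [IsFiniteMeasure P]
    {N : Ω → ℕ} (hm : Measurable N) (φ : ℕ → ℝ)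
    (hint : Integrable (fun ω => φ (N ω)) P) :
    ∫ ω, φ (N ω) ∂P = ∑' k : ℕ, (P {ω | N ω = k}).toReal * φ k := by
  have hφ : Measurable φ := measurable_from_nat
  rw [← integral_map hm.aemeasurable hφ.stronglyMeasurable.aestronglyMeasurable]
  rw [integral_countable' ((integrable_map_measure
    hφ.stronglyMeasurable.aestronglyMeasurable hm.aemeasurable).mpr hint)]
  exact tsum_congr fun k => by
    rw [measureReal_def, Measure.map_apply hm (measurableSet_singleton k), smul_eq_mul]
    rfl

lemma lintegral_comp_nat {Ω : Type*} [MeasurableSpace Ω] (P : Measure Ω)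
    {N : Ω → ℕ} (hm : Measurable N) (φ : ℕ → ℝ≥0∞) :
    ∫⁻ ω, φ (N ω) ∂P = ∑' k : ℕ, φ k * P {ω | N ω = k} := by
  rw [← lintegral_map measurable_from_nat hm, lintegral_countable']
  exact tsum_congr fun k => by
    rw [Measure.map_apply hm (measurableSet_singleton k)]
    rfl

lemma integrable_coe_nat {Ω : Type*} [MeasurableSpace Ω] (P : Measure Ω) [IsProbabilityMeasure P]
    {N : Ω → ℕ} (hm : Measurable N) {l : ℝ} (hl : 0 < l)
    (hp : ∀ k : ℕ, P {ω | N ω = k} = ENNReal.ofReal (pois l k)) :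
    Integrable (fun ω => (N ω : ℝ)) P := by
  refine ⟨((measurable_from_nat (f := fun k : ℕ => (k : ℝ))).comp hm).aestronglyMeasurable, ?_⟩
  rw [hasFiniteIntegral_iff_ofReal (ae_of_all _ fun ω => by positivity)]
  rw [lintegral_comp_nat P hm (fun k => ENNReal.ofReal (k : ℝ))]
  have : ∀ k : ℕ, ENNReal.ofReal (k : ℝ) * P {ω | N ω = k}
      = ENNReal.ofReal ((k : ℝ) * pois l k) := by
    intro k
    rw [hp k, ← ENNReal.ofReal_mul (Nat.cast_nonneg k)]
  rw [tsum_congr this, ← ENNReal.ofReal_tsum_of_nonneg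
    (fun k => mul_nonneg (Nat.cast_nonneg k) (pois_nonneg hl.le k)) (summable_mul_pois l)]
  exact ENNReal.ofReal_lt_top

lemma mean_coe_nat {Ω : Type*} [MeasurableSpace Ω] (P : Measure Ω) [IsProbabilityMeasure P]
    {N : Ω → ℕ} (hm : Measurable N) {l : ℝ} (hl : 0 < l)
    (hp : ∀ k : ℕ, P {ω | N ω = k} = ENNReal.ofReal (pois l k)) :
    ∫ ω, (N ω : ℝ) ∂P = l := by
  rw [integral_comp_nat P hm (fun k => (k : ℝ)) (integrable_coe_nat P hm hl hp)]
  have : ∀ k : ℕ, (P {ω | N ω = k}).toReal * (k : ℝ) = (k : ℝ) * pois l k := by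
    intro k
    rw [hp k, ENNReal.toReal_ofReal (pois_nonneg hl.le k), mul_comm]
  rw [tsum_congr this, tsum_mul_pois]


/-- For `a > 0` and `c ≥ 1`, a Poisson random variable `N_{ca}` with mean `ca` is
dominated in the convex order by `c` times a Poisson random variable `N_a` with mean `a`:
`E[f(N_{ca})] ≤ E[f(c·N_a)]` for every convex `f : ℝ → ℝ` with both expectations finite. -/
theorem poisson_convex_order
    {Ω : Type*} [MeasurableSpace Ω] (P : Measure Ω) [IsProbabilityMeasure P]
    (a c : ℝ) (ha : 0 < a) (hc : 1 ≤ c)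
    (Nca Na : Ω → ℕ) (hmca : Measurable Nca) (hma : Measurable Na)
    (hpca : ∀ k : ℕ, (P {ω | Nca ω = k}).toReal =
      Real.exp (-(c * a)) * (c * a) ^ k / (k.factorial : ℝ))
    (hpa : ∀ k : ℕ, (P {ω | Na ω = k}).toReal =
      Real.exp (-a) * a ^ k / (k.factorial : ℝ)) :
    ∀ f : ℝ → ℝ, ConvexOn ℝ Set.univ f →
      Integrable (fun ω => f (Nca ω : ℝ)) P →
      Integrable (fun ω => f (c * (Na ω : ℝ))) P →
      ∫ ω, f (Nca ω : ℝ) ∂P ≤ ∫ ω, f (c * (Na ω : ℝ)) ∂P := by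
  intro f hf hint1 hint2
  have hc0 : (0:ℝ) < c := lt_of_lt_of_le one_pos hc
  have hca : (0:ℝ) < c * a := mul_pos hc0 ha
  -- masses
  have hPca : ∀ k : ℕ, P {ω | Nca ω = k} = ENNReal.ofReal (pois (c*a) k) := by
    intro k
    rw [← ENNReal.ofReal_toReal (measure_ne_top P _), hpca k]
    rfl
  have hPa : ∀ k : ℕ, P {ω | Na ω = k} = ENNReal.ofReal (pois a k) := by
    intro k
    rw [← ENNReal.ofReal_toReal (measure_ne_top P _), hpa k]
    rfl
  -- affine minorant
  set β : ℝ := f 0 - f (-1) with hβ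
  set g : ℝ → ℝ := fun x => f x - (f 0 + β * x) with hgdef
  have hmin : ∀ x : ℝ, 0 ≤ x → 0 ≤ g x := by
    intro x hx
    rcases eq_or_lt_of_le hx with h | h
    · simp [hgdef, ← h]
    · have hs := hf.secant_mono (a := (0:ℝ)) (x := (-1:ℝ)) (y := x)
        (Set.mem_univ _) (Set.mem_univ _) (Set.mem_univ _)
        (by norm_num) (ne_of_gt h) (by linarith)
      have hs' : β ≤ (f x - f 0) / x := by
        have : (f (-1) - f 0) / (-1 - 0) = β := by rw [hβ]; ring
        rw [this, sub_zero] at hs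
        exact hs
      have := (le_div_iff₀ h).mp hs'
      simp only [hgdef]
      linarith
  have hgconv : ConvexOn ℝ Set.univ g := by
    have haff : ConvexOn ℝ Set.univ (fun x : ℝ => -(f 0) + (-β) * x) := by
      refine ⟨convex_univ, fun x _ y _ p q hp hq hpq => ?_⟩
      simp only [smul_eq_mul]
      apply le_of_eq
      linear_combination (f 0) * hpq
    have heq : (fun x : ℝ => f x + (-(f 0) + (-β) * x)) = g := by
      funext x; simp only [hgdef]; ring
    exact heq ▸ hf.add haff
  -- integrability pieces
  have hNcaInt : Integrable (fun ω => (Nca ω : ℝ)) P := integrable_coe_nat P hmca hca hPca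
  have hNaInt : Integrable (fun ω => (Na ω : ℝ)) P := integrable_coe_nat P hma ha hPa
  have hlin1 : Integrable (fun ω => f 0 + β * (Nca ω : ℝ)) P :=
    (integrable_const _).add (hNcaInt.const_mul β)
  have hlin2 : Integrable (fun ω => f 0 + β * (c * (Na ω : ℝ))) P := by
    have := (integrable_const (f 0)).add ((hNaInt.const_mul (β * c)))
    exact this.congr (ae_of_all _ fun ω => by simp only [Pi.add_apply]; ring)
  have hg1 : Integrable (fun ω => g (Nca ω : ℝ)) P := by
    have := hint1.sub hlin1
    exact this.congr (ae_of_all _ fun ω => by simp only [hgdef, Pi.sub_apply])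
  have hg2 : Integrable (fun ω => g (c * (Na ω : ℝ))) P := by
    have := hint2.sub hlin2
    exact this.congr (ae_of_all _ fun ω => by simp only [hgdef, Pi.sub_apply])
  -- means
  have hmean1 : ∫ ω, (Nca ω : ℝ) ∂P = c * a := mean_coe_nat P hmca hca hPca
  have hmean2 : ∫ ω, (Na ω : ℝ) ∂P = a := mean_coe_nat P hma ha hPa
  -- linear parts
  have hL1 : ∫ ω, (f 0 + β * (Nca ω : ℝ)) ∂P = f 0 + β * (c * a) := by
    rw [integral_add (integrable_const _) (hNcaInt.const_mul β), integral_const,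
      integral_const_mul, hmean1]
    simp [measure_univ]
  have hL2 : ∫ ω, (f 0 + β * (c * (Na ω : ℝ))) ∂P = f 0 + β * (c * a) := by
    have hrw : (fun ω => f 0 + β * (c * (Na ω : ℝ))) = fun ω => f 0 + (β * c) * (Na ω : ℝ) := by
      funext ω; ring
    rw [hrw, integral_add (integrable_const _) (hNaInt.const_mul (β * c)), integral_const,
      integral_const_mul, hmean2]
    simp [measure_univ]
    ring
  -- nonneg parts comparison
  have hgNca_nonneg : ∀ ω, 0 ≤ g (Nca ω : ℝ) := fun ω => hmin _ (Nat.cast_nonneg _)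
  have hgNa_nonneg : ∀ ω, 0 ≤ g (c * (Na ω : ℝ)) := fun ω => hmin _ (by positivity)
  have e1 : ∫ ω, g (Nca ω : ℝ) ∂P
      = (∫⁻ ω, ENNReal.ofReal (g (Nca ω : ℝ)) ∂P).toReal :=
    integral_eq_lintegral_of_nonneg_ae (ae_of_all _ hgNca_nonneg) hg1.aestronglyMeasurable
  have e2 : ∫ ω, g (c * (Na ω : ℝ)) ∂P
      = (∫⁻ ω, ENNReal.ofReal (g (c * (Na ω : ℝ))) ∂P).toReal :=
    integral_eq_lintegral_of_nonneg_ae (ae_of_all _ hgNa_nonneg) hg2.aestronglyMeasurable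
  have L1 : ∫⁻ ω, ENNReal.ofReal (g (Nca ω : ℝ)) ∂P
      = ∑' k : ℕ, ENNReal.ofReal (g (k : ℝ)) * ENNReal.ofReal (pois (c*a) k) := by
    rw [lintegral_comp_nat P hmca (fun k => ENNReal.ofReal (g (k : ℝ)))]
    exact tsum_congr fun k => by rw [hPca k]
  have L2 : ∫⁻ ω, ENNReal.ofReal (g (c * (Na ω : ℝ))) ∂P
      = ∑' k : ℕ, ENNReal.ofReal (g (c * (k : ℝ))) * ENNReal.ofReal (pois a k) := by
    rw [lintegral_comp_nat P hma (fun k => ENNReal.ofReal (g (c * (k : ℝ))))]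
    exact tsum_congr fun k => by rw [hPa k]
  have hfin : ∫⁻ ω, ENNReal.ofReal (g (c * (Na ω : ℝ))) ∂P ≠ ⊤ := by
    rw [lintegral_ofReal_ne_top_iff_integrable hg2.aestronglyMeasurable
      (ae_of_all _ hgNa_nonneg)]
    exact hg2
  have hgle : ∫ ω, g (Nca ω : ℝ) ∂P ≤ ∫ ω, g (c * (Na ω : ℝ)) ∂P := by
    rw [e1, e2]
    apply ENNReal.toReal_mono hfin
    rw [L1, L2]
    exact key_lintegral_le ha hc hgconv hmin
  -- assemble
  have hsplit1 : (fun ω => f (Nca ω : ℝ))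
      = fun ω => (f 0 + β * (Nca ω : ℝ)) + g (Nca ω : ℝ) := by
    funext ω; simp only [hgdef]; ring
  have hsplit2 : (fun ω => f (c * (Na ω : ℝ)))
      = fun ω => (f 0 + β * (c * (Na ω : ℝ))) + g (c * (Na ω : ℝ)) := by
    funext ω; simp only [hgdef]; ring
  rw [hsplit1, hsplit2, integral_add hlin1 hg1, integral_add hlin2 hg2, hL1, hL2]
  linarith
end

section
/- Let N_0, N_1, N_2, … be independent, identically distributed random variables with values in [0,∞]. For m ≥ 1 define Φ^m = Σ_{k=1}^m 1[N_k ≥ k] and Φ_0^m = Σ_{k=1}^m 1[N_0 ≥ k]. Then Φ^m ≤_cx Φ_0^m for every m: for every convex g : ℝ → ℝ, E[g(Σ_{k=1}^m 1[N_k ≥ k])] ≤ E[g(Σ_{k=1}^m 1[N_0 ≥ k])]. Moreover, if Σ_{k≥1} P(N_0 ≥ k) < ∞, then the almost surely finite infinite sums Φ = Σ_{k=1}^∞ 1[N_k ≥ k] and Φ_0 = Σ_{k=1}^∞ 1[N_0 ≥ k] satisfy Φ ≤_cx Φ_0. (Taking N_k Poisson, Φ is the counting function of the squared radii of the Ginibre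 point process and Φ_0 that of the corresponding Poisson process.) -/
open MeasureTheory ENNReal

open scoped Classical

set_option linter.unusedSectionVars false

section Helpers

lemma cx_continuous {g : ℝ → ℝ} (hg : ConvexOn ℝ Set.univ g) : Continuous g := by
  rw [← continuousOn_univ]
  exact hg.continuousOn isOpen_univ

lemma cx_shift {g : ℝ → ℝ} (hg : ConvexOn ℝ Set.univ g) :
    ConvexOn ℝ Set.univ (fun x => g (x + 1)) := by
  have h := hg.translate_left 1
  simp only [Set.preimage_univ] at h
  exact h

lemma cx_step_mono {g : ℝ → ℝ} (hg : ConvexOn ℝ Set.univ g) {x y : ℝ} (hxy : x ≤ y) :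
    g (x + 1) - g x ≤ g (y + 1) - g y := by
  rcases eq_or_lt_of_le hxy with rfl | h
  · exact le_rfl
  · have h1 : (g (x+1) - g x) / ((x+1) - x) ≤ (g (y+1) - g x) / ((y+1) - x) := by
      apply hg.secant_mono (Set.mem_univ x) (Set.mem_univ (x+1)) (Set.mem_univ (y+1))
        (by linarith) (by linarith) (by linarith)
    have h2 : (g x - g (y+1)) / (x - (y+1)) ≤ (g y - g (y+1)) / (y - (y+1)) := by
      apply hg.secant_mono (Set.mem_univ (y+1)) (Set.mem_univ x) (Set.mem_univ y)
        (by linarith) (by linarith) hxy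
    have e1 : (g (x+1) - g x) / ((x+1) - x) = g (x+1) - g x := by ring_nf
    have e2 : (g y - g (y+1)) / (y - (y+1)) = g (y+1) - g y := by
      field_simp
      ring
    have e3 : (g x - g (y+1)) / (x - (y+1)) = (g (y+1) - g x) / ((y+1) - x) := by
      rw [← neg_div_neg_eq]; ring_nf
    rw [e1] at h1
    rw [e2, e3] at h2
    linarith

lemma cx_lower {g : ℝ → ℝ} (hg : ConvexOn ℝ Set.univ g) {t : ℝ} (ht : 0 ≤ t) :
    g 0 + (g 0 - g (-1)) * t ≤ g t := by
  rcases eq_or_lt_of_le ht with rfl | h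
  · simp
  · have h1 : (g (-1) - g 0) / ((-1) - 0) ≤ (g t - g 0) / (t - 0) := by
      apply hg.secant_mono (Set.mem_univ 0) (Set.mem_univ (-1)) (Set.mem_univ t)
        (by norm_num) (by linarith) (by linarith)
    have e1 : (g (-1) - g 0) / ((-1) - 0) = g 0 - g (-1) := by ring_nf
    rw [e1, sub_zero, le_div_iff₀ h] at h1
    linarith

lemma cx_upper {g : ℝ → ℝ} (hg : ConvexOn ℝ Set.univ g) {t T : ℝ} (ht : 0 ≤ t) (htT : t ≤ T) :
    g t ≤ max (g 0) (g T) := by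
  have : t ∈ segment ℝ (0:ℝ) T := by
    rw [segment_eq_Icc (le_trans ht htT)]; exact ⟨ht, htT⟩
  exact hg.le_on_segment (Set.mem_univ 0) (Set.mem_univ T) this

lemma cx_abs_bound {g : ℝ → ℝ} (hg : ConvexOn ℝ Set.univ g) {t T : ℝ} (ht : 0 ≤ t) (htT : t ≤ T) :
    |g t| ≤ |g 0| + |g T| + |g 0 - g (-1)| * T := by
  have hT : 0 ≤ T := le_trans ht htT
  have h1 := cx_upper hg ht htT
  have h2 := cx_lower hg ht
  have h3 : (g 0 - g (-1)) * t ≥ -(|g 0 - g (-1)| * T) := by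
    have : |(g 0 - g (-1)) * t| ≤ |g 0 - g (-1)| * T := by
      rw [abs_mul]
      exact mul_le_mul_of_nonneg_left (by rwa [abs_of_nonneg ht]) (abs_nonneg _)
    linarith [neg_abs_le ((g 0 - g (-1)) * t)]
  rw [abs_le]
  constructor
  · have := neg_abs_le (g 0); nlinarith [abs_nonneg (g T)]
  · rcases le_max_iff.mp h1 with h | h
    · nlinarith [le_abs_self (g 0), abs_nonneg (g T), abs_nonneg (g 0 - g (-1)), abs_nonneg (g 0)]
    · nlinarith [le_abs_self (g T), abs_nonneg (g 0), abs_nonneg (g 0 - g (-1))]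


variable {Ω : Type*} [MeasurableSpace Ω] {P : Measure Ω} [IsProbabilityMeasure P]

lemma integrable_of_bdd {f : Ω → ℝ} (hf : AEStronglyMeasurable f P) (C : ℝ)
    (h : ∀ ω, |f ω| ≤ C) : Integrable f P :=
  (integrable_const C).mono' hf (Filter.Eventually.of_forall (fun ω => by
    simpa [Real.norm_eq_abs] using h ω))

lemma meas_ind {N : Ω → ℝ≥0∞} (hN : Measurable N) (c : ℝ≥0∞) :
    Measurable (fun ω => if c ≤ N ω then (1:ℝ) else 0) :=
  Measurable.ite (measurableSet_le measurable_const hN) measurable_const measurable_const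

lemma meas_sum {N : ℕ → Ω → ℝ≥0∞} (hmeas : ∀ k, Measurable (N k)) (j : ℕ → ℕ) (m : ℕ) :
    Measurable (fun ω => ∑ k ∈ Finset.Icc 1 m, if (k : ℝ≥0∞) ≤ N (j k) ω then (1:ℝ) else 0) :=
  Finset.measurable_sum _ (fun k _ => meas_ind (hmeas (j k)) _)

lemma sum_mem_Icc {N : ℕ → Ω → ℝ≥0∞} (j : ℕ → ℕ) (m : ℕ) (ω : Ω) :
    (∑ k ∈ Finset.Icc 1 m, if (k : ℝ≥0∞) ≤ N (j k) ω then (1:ℝ) else 0) ∈ Set.Icc (0:ℝ) m := by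
  constructor
  · exact Finset.sum_nonneg (fun k _ => by split <;> norm_num)
  · calc (∑ k ∈ Finset.Icc 1 m, if (k : ℝ≥0∞) ≤ N (j k) ω then (1:ℝ) else 0)
        ≤ ∑ k ∈ Finset.Icc 1 m, (1:ℝ) :=
          Finset.sum_le_sum (fun k _ => by split <;> norm_num)
    _ = m := by simp

lemma cont_comp_integrable {f : Ω → ℝ} (hf : Measurable f) {g : ℝ → ℝ} (hg : Continuous g)
    (m : ℝ) (hb : ∀ ω, f ω ∈ Set.Icc (0:ℝ) m) : Integrable (fun ω => g (f ω)) P := by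
  obtain ⟨C, hC⟩ := (isCompact_Icc (a := (0:ℝ)) (b := m)).exists_bound_of_continuousOn
    hg.continuousOn
  exact integrable_of_bdd ((hg.measurable.comp hf).aestronglyMeasurable) C
    (fun ω => by simpa [Real.norm_eq_abs] using hC _ (hb ω))


lemma indep_part {N : ℕ → Ω → ℝ≥0∞} (hmeas : ∀ k, Measurable (N k))
    (hindep : ProbabilityTheory.iIndepFun N P)
    (m : ℕ) {h : ℝ → ℝ} (hh : Measurable h) :
    ProbabilityTheory.IndepFun
      (fun ω => h (∑ k ∈ Finset.Icc 1 m, if (k : ℝ≥0∞) ≤ N k ω then (1:ℝ) else 0))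
      (fun ω => if ((m+1 : ℕ) : ℝ≥0∞) ≤ N (m+1) ω then (1:ℝ) else 0) P := by
  classical
  set S := Finset.Icc 1 m with hS
  set T : Finset ℕ := {m+1} with hT
  have hST : Disjoint S T := by
    simp only [hS, hT, Finset.disjoint_singleton_right, Finset.mem_Icc]
    omega
  have base := hindep.indepFun_finset S T hST hmeas
  set φ : ((i : S) → ℝ≥0∞) → ℝ :=
    fun v => h (∑ i ∈ S.attach, if ((i : ℕ) : ℝ≥0∞) ≤ v i then (1:ℝ) else 0) with hφdef
  set ψ : ((i : T) → ℝ≥0∞) → ℝ :=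
    fun v => if ((m+1 : ℕ) : ℝ≥0∞) ≤ v ⟨m+1, Finset.mem_singleton_self _⟩ then (1:ℝ) else 0
    with hψdef
  have hφ : Measurable φ := hh.comp (Finset.measurable_sum _ (fun i _ =>
    Measurable.ite (measurableSet_le measurable_const (measurable_pi_apply i))
      measurable_const measurable_const))
  have hψ : Measurable ψ := Measurable.ite
    (measurableSet_le measurable_const (measurable_pi_apply _)) measurable_const measurable_const
  have key := base.comp hφ hψ
  have e1 : (φ ∘ fun a (i : S) => N i a)
      = fun ω => h (∑ k ∈ Finset.Icc 1 m, if (k : ℝ≥0∞) ≤ N k ω then (1:ℝ) else 0) := by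
    funext ω
    simp only [Function.comp, hφdef]
    congr 1
    exact Finset.sum_attach S (fun k => if (k : ℝ≥0∞) ≤ N k ω then (1:ℝ) else 0)
  have e2 : (ψ ∘ fun a (i : T) => N i a)
      = fun ω => if ((m+1 : ℕ) : ℝ≥0∞) ≤ N (m+1) ω then (1:ℝ) else 0 := rfl
  rw [e1, e2] at key
  exact key

lemma ident_prob {N : ℕ → Ω → ℝ≥0∞} (hmeas : ∀ k, Measurable (N k))
    (hident : ∀ k, P.map (N k) = P.map (N 0)) (j : ℕ) (c : ℝ≥0∞) :
    P {ω | c ≤ N j ω} = P {ω | c ≤ N 0 ω} := by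
  have h1 : ∀ i, P {ω | c ≤ N i ω} = (P.map (N i)) (Set.Ici c) := by
    intro i
    rw [Measure.map_apply (hmeas i) measurableSet_Ici]
    rfl
  rw [h1 j, h1 0, hident j]

lemma finite_cx {N : ℕ → Ω → ℝ≥0∞} (hmeas : ∀ k, Measurable (N k))
    (hindep : ProbabilityTheory.iIndepFun N P)
    (hident : ∀ k, P.map (N k) = P.map (N 0)) :
    ∀ (m : ℕ) (g : ℝ → ℝ), ConvexOn ℝ Set.univ g →
      ∫ ω, g (∑ k ∈ Finset.Icc 1 m, if (k : ℝ≥0∞) ≤ N k ω then (1 : ℝ) else 0) ∂P ≤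
      ∫ ω, g (∑ k ∈ Finset.Icc 1 m, if (k : ℝ≥0∞) ≤ N 0 ω then (1 : ℝ) else 0) ∂P := by
  intro m
  induction m with
  | zero => intro g hg; simp
  | succ m ih =>
    intro g hg
    have hgc := cx_continuous hg
    set X : Ω → ℝ := fun ω => ∑ k ∈ Finset.Icc 1 m, if (k : ℝ≥0∞) ≤ N k ω then (1:ℝ) else 0
      with hXdef
    set Y : Ω → ℝ := fun ω => ∑ k ∈ Finset.Icc 1 m, if (k : ℝ≥0∞) ≤ N 0 ω then (1:ℝ) else 0
      with hYdef
    set B : Ω → ℝ := fun ω => if ((m+1 : ℕ) : ℝ≥0∞) ≤ N (m+1) ω then (1:ℝ) else 0 with hBdef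
    set C : Ω → ℝ := fun ω => if ((m+1 : ℕ) : ℝ≥0∞) ≤ N 0 ω then (1:ℝ) else 0 with hCdef
    have hXm : Measurable X := meas_sum hmeas id m
    have hYm : Measurable Y := meas_sum hmeas (fun _ => 0) m
    have hXb : ∀ ω, X ω ∈ Set.Icc (0:ℝ) m := sum_mem_Icc id m
    have hYb : ∀ ω, Y ω ∈ Set.Icc (0:ℝ) m := sum_mem_Icc (fun _ => 0) m
    have hBm : Measurable B := meas_ind (hmeas (m+1)) _
    have hCm : Measurable C := meas_ind (hmeas 0) _
    have hB01 : ∀ ω, B ω = 0 ∨ B ω = 1 := fun ω => by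
      by_cases h : ((m+1 : ℕ) : ℝ≥0∞) ≤ N (m+1) ω
      · right; simp only [hBdef]; rw [if_pos h]
      · left; simp only [hBdef]; rw [if_neg h]
    have hC01 : ∀ ω, C ω = 0 ∨ C ω = 1 := fun ω => by
      by_cases h : ((m+1 : ℕ) : ℝ≥0∞) ≤ N 0 ω
      · right; simp only [hCdef]; rw [if_pos h]
      · left; simp only [hCdef]; rw [if_neg h]
    obtain ⟨C0, hC0⟩ := (isCompact_Icc (a := (0:ℝ)) (b := (m:ℝ)+1)).exists_bound_of_continuousOn
      hgc.continuousOn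
    have habs1 : ∀ ω, |g (X ω + 1)| ≤ C0 := fun ω => by
      have := hC0 (X ω + 1) ⟨by linarith [(hXb ω).1], by linarith [(hXb ω).2]⟩
      simpa [Real.norm_eq_abs] using this
    have habs0 : ∀ ω, |g (X ω)| ≤ C0 := fun ω => by
      have := hC0 (X ω) ⟨(hXb ω).1, by linarith [(hXb ω).2]⟩
      simpa [Real.norm_eq_abs] using this
    have habsY1 : ∀ ω, |g (Y ω + 1)| ≤ C0 := fun ω => by
      have := hC0 (Y ω + 1) ⟨by linarith [(hYb ω).1], by linarith [(hYb ω).2]⟩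
      simpa [Real.norm_eq_abs] using this
    have habsY0 : ∀ ω, |g (Y ω)| ≤ C0 := fun ω => by
      have := hC0 (Y ω) ⟨(hYb ω).1, by linarith [(hYb ω).2]⟩
      simpa [Real.norm_eq_abs] using this
    have hg1m : Measurable (fun x : ℝ => g (x + 1)) :=
      (hgc.comp (continuous_id.add continuous_const)).measurable
    have hIX1 : Integrable (fun ω => g (X ω + 1)) P :=
      integrable_of_bdd ((hg1m.comp hXm).aestronglyMeasurable) C0 habs1
    have hIX0 : Integrable (fun ω => g (X ω)) P :=
      integrable_of_bdd ((hgc.measurable.comp hXm).aestronglyMeasurable) C0 habs0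
    have hIY1 : Integrable (fun ω => g (Y ω + 1)) P :=
      integrable_of_bdd ((hg1m.comp hYm).aestronglyMeasurable) C0 habsY1
    have hIY0 : Integrable (fun ω => g (Y ω)) P :=
      integrable_of_bdd ((hgc.measurable.comp hYm).aestronglyMeasurable) C0 habsY0
    have hIB : Integrable B P := integrable_of_bdd hBm.aestronglyMeasurable 1
      (fun ω => by rcases hB01 ω with h | h <;> simp [h])
    have hmulbd : ∀ (D : Ω → ℝ) (f : Ω → ℝ), (∀ ω, D ω = 0 ∨ D ω = 1) → (∀ ω, |f ω| ≤ C0) →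
        ∀ ω, |D ω * f ω| ≤ C0 := by
      intro D f hD hf ω
      rcases hD ω with h | h
      · simp only [h, zero_mul, abs_zero]
        exact le_trans (abs_nonneg _) (hf ω)
      · simpa [h] using hf ω
    have hIBX1 : Integrable (fun ω => B ω * g (X ω + 1)) P :=
      integrable_of_bdd (hBm.aestronglyMeasurable.mul ((hg1m.comp hXm).aestronglyMeasurable)) C0
        (hmulbd B _ hB01 habs1)
    have hIBX0 : Integrable (fun ω => B ω * g (X ω)) P :=
      integrable_of_bdd
        (hBm.aestronglyMeasurable.mul ((hgc.measurable.comp hXm).aestronglyMeasurable)) C0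
        (hmulbd B _ hB01 habs0)
    have hICY1 : Integrable (fun ω => C ω * g (Y ω + 1)) P :=
      integrable_of_bdd (hCm.aestronglyMeasurable.mul ((hg1m.comp hYm).aestronglyMeasurable)) C0
        (hmulbd C _ hC01 habsY1)
    have hICY0 : Integrable (fun ω => C ω * g (Y ω)) P :=
      integrable_of_bdd
        (hCm.aestronglyMeasurable.mul ((hgc.measurable.comp hYm).aestronglyMeasurable)) C0
        (hmulbd C _ hC01 habsY0)
    set p : ℝ := (P {ω | ((m+1 : ℕ) : ℝ≥0∞) ≤ N 0 ω}).toReal with hpdef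
    have hp0 : 0 ≤ p := ENNReal.toReal_nonneg
    have hp1 : p ≤ 1 := by
      rw [hpdef]
      exact ENNReal.toReal_le_of_le_ofReal zero_le_one (by simpa using prob_le_one)
    have hintC : ∫ ω, C ω ∂P = p := by
      have hA : MeasurableSet {ω | ((m+1 : ℕ) : ℝ≥0∞) ≤ N 0 ω} :=
        measurableSet_le measurable_const (hmeas 0)
      have e : C = Set.indicator {ω | ((m+1 : ℕ) : ℝ≥0∞) ≤ N 0 ω} (fun _ => (1:ℝ)) := by
        funext ω; simp [hCdef, Set.indicator_apply]
      rw [e, integral_indicator_const (1:ℝ) hA, smul_eq_mul, mul_one, measureReal_def, hpdef]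
    have hintB : ∫ ω, B ω ∂P = p := by
      have hA : MeasurableSet {ω | ((m+1 : ℕ) : ℝ≥0∞) ≤ N (m+1) ω} :=
        measurableSet_le measurable_const (hmeas (m+1))
      have e : B = Set.indicator {ω | ((m+1 : ℕ) : ℝ≥0∞) ≤ N (m+1) ω} (fun _ => (1:ℝ)) := by
        funext ω; simp [hBdef, Set.indicator_apply]
      rw [e, integral_indicator_const (1:ℝ) hA, smul_eq_mul, mul_one, measureReal_def, hpdef,
        ident_prob hmeas hident (m+1) _]
    have hind1 : ∫ ω, B ω * g (X ω + 1) ∂P = p * ∫ ω, g (X ω + 1) ∂P := by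
      have h' : ∫ ω, B ω * g (X ω + 1) ∂P
          = (∫ ω, B ω ∂P) * ∫ ω, g (X ω + 1) ∂P :=
        (indep_part hmeas hindep m hg1m).symm.integral_fun_mul_eq_mul_integral hIB.aestronglyMeasurable hIX1.aestronglyMeasurable
      rw [h', hintB]
    have hind0 : ∫ ω, B ω * g (X ω) ∂P = p * ∫ ω, g (X ω) ∂P := by
      have h' : ∫ ω, B ω * g (X ω) ∂P
          = (∫ ω, B ω ∂P) * ∫ ω, g (X ω) ∂P :=
        (indep_part hmeas hindep m hgc.measurable).symm.integral_fun_mul_eq_mul_integral hIB.aestronglyMeasurable hIX0.aestronglyMeasurable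
      rw [h', hintB]
    have hXd : (fun ω => g (∑ k ∈ Finset.Icc 1 (m+1), if (k : ℝ≥0∞) ≤ N k ω then (1:ℝ) else 0))
        = fun ω => B ω * g (X ω + 1) + g (X ω) - B ω * g (X ω) := by
      funext ω
      rw [Finset.sum_Icc_succ_top (by omega : 1 ≤ m + 1)]
      by_cases h : ((m+1 : ℕ) : ℝ≥0∞) ≤ N (m+1) ω
      · simp only [hBdef, hXdef, if_pos h]; ring_nf
      · simp only [hBdef, hXdef, if_neg h]; ring_nf
    have hXint : ∫ ω, g (∑ k ∈ Finset.Icc 1 (m+1), if (k : ℝ≥0∞) ≤ N k ω then (1:ℝ) else 0) ∂P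
        = p * (∫ ω, g (X ω + 1) ∂P) + (1 - p) * ∫ ω, g (X ω) ∂P := by
      have hIsumX : Integrable (fun ω => B ω * g (X ω + 1) + g (X ω)) P := hIBX1.add hIX0
      rw [hXd, integral_sub hIsumX hIBX0, integral_add hIBX1 hIX0, hind1, hind0]
      ring
    have hfull : ∀ ω, ((m+1 : ℕ) : ℝ≥0∞) ≤ N 0 ω → Y ω = (m:ℝ) := by
      intro ω h
      simp only [hYdef]
      have he : ∀ k ∈ Finset.Icc 1 m, (if (k : ℝ≥0∞) ≤ N 0 ω then (1:ℝ) else 0) = 1 := by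
        intro k hk
        rw [if_pos]
        exact le_trans (by exact_mod_cast Nat.le_succ_of_le (Finset.mem_Icc.mp hk).2) h
      rw [Finset.sum_congr rfl he, Finset.sum_const, Nat.card_Icc]
      simp
    have hYtop1 : ∀ ω, C ω * g (Y ω + 1) = C ω * g ((m:ℝ) + 1) := by
      intro ω
      by_cases h : ((m+1 : ℕ) : ℝ≥0∞) ≤ N 0 ω
      · rw [hfull ω h]
      · simp only [hCdef]; rw [if_neg h]; ring
    have hYtop0 : ∀ ω, C ω * g (Y ω) = C ω * g (m:ℝ) := by
      intro ω
      by_cases h : ((m+1 : ℕ) : ℝ≥0∞) ≤ N 0 ω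
      · rw [hfull ω h]
      · simp only [hCdef]; rw [if_neg h]; ring
    have hYd : (fun ω => g (∑ k ∈ Finset.Icc 1 (m+1), if (k : ℝ≥0∞) ≤ N 0 ω then (1:ℝ) else 0))
        = fun ω => C ω * g (Y ω + 1) + g (Y ω) - C ω * g (Y ω) := by
      funext ω
      rw [Finset.sum_Icc_succ_top (by omega : 1 ≤ m + 1)]
      by_cases h : ((m+1 : ℕ) : ℝ≥0∞) ≤ N 0 ω
      · simp only [hCdef, hYdef, if_pos h]; ring_nf
      · simp only [hCdef, hYdef, if_neg h]; ring_nf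
    have hYint : ∫ ω, g (∑ k ∈ Finset.Icc 1 (m+1), if (k : ℝ≥0∞) ≤ N 0 ω then (1:ℝ) else 0) ∂P
        = p * g ((m:ℝ) + 1) + (∫ ω, g (Y ω) ∂P) - p * g (m:ℝ) := by
      have hIsumY : Integrable (fun ω => C ω * g (Y ω + 1) + g (Y ω)) P := hICY1.add hIY0
      rw [hYd, integral_sub hIsumY hICY0, integral_add hICY1 hIY0]
      have e1 : ∫ ω, C ω * g (Y ω + 1) ∂P = p * g ((m:ℝ) + 1) := by
        rw [integral_congr_ae (Filter.Eventually.of_forall hYtop1), integral_mul_const, hintC,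
          mul_comm]
      have e0 : ∫ ω, C ω * g (Y ω) ∂P = p * g (m:ℝ) := by
        rw [integral_congr_ae (Filter.Eventually.of_forall hYtop0), integral_mul_const, hintC,
          mul_comm]
      rw [e1, e0]
    have hIH1 : ∫ ω, g (X ω + 1) ∂P ≤ ∫ ω, g (Y ω + 1) ∂P := ih (fun x => g (x + 1)) (cx_shift hg)
    have hIH0 : ∫ ω, g (X ω) ∂P ≤ ∫ ω, g (Y ω) ∂P := ih g hg
    have hstep : (∫ ω, g (Y ω + 1) ∂P) - ∫ ω, g (Y ω) ∂P ≤ g ((m:ℝ) + 1) - g (m:ℝ) := by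
      rw [← integral_sub hIY1 hIY0]
      calc ∫ ω, (g (Y ω + 1) - g (Y ω)) ∂P
          ≤ ∫ _ω, (g ((m:ℝ) + 1) - g (m:ℝ)) ∂P := by
            apply integral_mono (hIY1.sub hIY0) (integrable_const _)
            intro ω
            exact cx_step_mono hg (hYb ω).2
        _ = g ((m:ℝ) + 1) - g (m:ℝ) := by simp
    rw [hXint, hYint]
    nlinarith [mul_le_mul_of_nonneg_left hIH1 hp0,
      mul_le_mul_of_nonneg_left hIH0 (by linarith : (0:ℝ) ≤ 1 - p),
      mul_le_mul_of_nonneg_left hstep hp0]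


lemma aux_tsum {a : ℕ → ℝ} (ha : ∀ k, 0 ≤ a k) {K : ℕ} (hK : ∀ k, K ≤ k → a k = 0) :
    (∀ m, ∑ k ∈ Finset.range m, a k ≤ ∑' k, a k) ∧ (0 ≤ ∑' k, a k) ∧
      Filter.Tendsto (fun m => ∑ k ∈ Finset.range m, a k) Filter.atTop (nhds (∑' k, a k)) := by
  have hzero : ∀ k ∉ Finset.range K, a k = 0 := fun k hk =>
    hK k (by simpa using hk)
  have htsum : ∑' k, a k = ∑ k ∈ Finset.range K, a k := tsum_eq_sum hzero
  have hsub : ∀ m, K ≤ m → ∑ k ∈ Finset.range m, a k = ∑ k ∈ Finset.range K, a k := by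
    intro m hm
    exact (Finset.sum_subset (Finset.range_subset_range.mpr hm)
      (fun x _ hx => hK x (by simpa using hx))).symm
  refine ⟨?_, ?_, ?_⟩
  · intro m
    calc ∑ k ∈ Finset.range m, a k
        ≤ ∑ k ∈ Finset.range (max m K), a k :=
          Finset.sum_le_sum_of_subset_of_nonneg (Finset.range_subset_range.mpr (le_max_left _ _))
            (fun k _ _ => ha k)
      _ = ∑ k ∈ Finset.range K, a k := hsub _ (le_max_right _ _)
      _ = ∑' k, a k := htsum.symm
  · rw [htsum]; exact Finset.sum_nonneg (fun k _ => ha k)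
  · refine Filter.Tendsto.congr' ?_ (tendsto_const_nhds (x := ∑' k, a k))
    filter_upwards [Filter.eventually_ge_atTop K] with m hm
    rw [htsum, hsub m hm]

lemma reindex_sum {N : ℕ → Ω → ℝ≥0∞} (j : ℕ → ℕ) (m : ℕ) (ω : Ω) :
    (∑ k ∈ Finset.Icc 1 m, if (k : ℝ≥0∞) ≤ N (j k) ω then (1:ℝ) else 0)
      = ∑ k ∈ Finset.range m, if ((k + 1 : ℕ) : ℝ≥0∞) ≤ N (j (k + 1)) ω then (1:ℝ) else 0 := by
  rw [← Finset.Ico_add_one_right_eq_Icc, Finset.sum_Ico_eq_sum_range]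
  exact Finset.sum_congr (by simp) (fun i _ => by rw [Nat.add_comm 1 i])

lemma side_facts {W : ℕ → Ω → ℝ≥0∞} (hW : ∀ k, Measurable (W k))
    (hfin' : (∑' k : ℕ, P {ω | ((k + 1 : ℕ) : ℝ≥0∞) ≤ W k ω}) ≠ ⊤)
    {g : ℝ → ℝ} (hg : ConvexOn ℝ Set.univ g)
    (hI : Integrable (fun ω => g (∑' k : ℕ,
      if ((k + 1 : ℕ) : ℝ≥0∞) ≤ W k ω then (1:ℝ) else 0)) P) :
    Filter.Tendsto
      (fun m => ∫ ω, g (∑ k ∈ Finset.range m,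
        if ((k + 1 : ℕ) : ℝ≥0∞) ≤ W k ω then (1:ℝ) else 0) ∂P)
      Filter.atTop
      (nhds (∫ ω, g (∑' k : ℕ,
        if ((k + 1 : ℕ) : ℝ≥0∞) ≤ W k ω then (1:ℝ) else 0) ∂P)) := by
  classical
  have hgc := cx_continuous hg
  set A : ℕ → Set Ω := fun k => {ω | ((k + 1 : ℕ) : ℝ≥0∞) ≤ W k ω} with hA
  have hAm : ∀ k, MeasurableSet (A k) := fun k =>
    measurableSet_le measurable_const (hW k)
  set f : Ω → ℝ := fun ω => ∑' k : ℕ, if ((k + 1 : ℕ) : ℝ≥0∞) ≤ W k ω then (1:ℝ) else 0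
    with hfdef
  -- a.e. eventually zero
  have hae : ∀ᵐ ω ∂P, ∀ᶠ k in Filter.atTop, ω ∉ A k := ae_eventually_notMem hfin'
  -- integrability of f
  set F : Ω → ℝ≥0∞ := fun ω => ∑' k : ℕ, if ((k + 1 : ℕ) : ℝ≥0∞) ≤ W k ω then (1:ℝ≥0∞) else 0
    with hFdef
  have hFm : Measurable F := Measurable.ennreal_tsum (fun k =>
    Measurable.ite (hAm k) measurable_const measurable_const)
  have hFlint : ∫⁻ ω, F ω ∂P = ∑' k, P (A k) := by
    rw [hFdef]
    rw [lintegral_tsum (fun k => (Measurable.ite (hAm k) measurable_const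
      measurable_const).aemeasurable)]
    congr 1
    funext k
    have e : (fun ω => if ((k + 1 : ℕ) : ℝ≥0∞) ≤ W k ω then (1:ℝ≥0∞) else 0)
        = (A k).indicator (fun _ => (1:ℝ≥0∞)) := by
      funext ω
      simp [Set.indicator_apply, hA, Set.mem_setOf_eq]
    rw [e, lintegral_indicator (hAm k), setLIntegral_one]
  have hIF : Integrable (fun ω => (F ω).toReal) P := by
    apply integrable_toReal_of_lintegral_ne_top hFm.aemeasurable
    rw [hFlint]
    exact hfin'
  have hfae : f =ᵐ[P] fun ω => (F ω).toReal := by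
    filter_upwards [hae] with ω hω
    obtain ⟨K, hK⟩ := Filter.eventually_atTop.mp hω
    have hcond : ∀ k, K ≤ k → ¬ ((k + 1 : ℕ) : ℝ≥0∞) ≤ W k ω := fun k hk => hK k hk
    have hzR : ∀ k ∉ Finset.range K,
        (if ((k + 1 : ℕ) : ℝ≥0∞) ≤ W k ω then (1:ℝ) else 0) = 0 := by
      intro k hk
      rw [if_neg (hcond k (by simpa using hk))]
    have hzE : ∀ k ∉ Finset.range K,
        (if ((k + 1 : ℕ) : ℝ≥0∞) ≤ W k ω then (1:ℝ≥0∞) else 0) = 0 := by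
      intro k hk
      rw [if_neg (hcond k (by simpa using hk))]
    rw [hfdef]
    simp only
    rw [tsum_eq_sum hzR, hFdef]
    simp only
    rw [tsum_eq_sum hzE, ENNReal.toReal_sum (fun k _ => by split <;> simp)]
    exact Finset.sum_congr rfl (fun k _ => by split <;> simp)
  have hIntf : Integrable f P := hIF.congr hfae.symm
  -- dominated convergence
  set s : ℝ := |g 0 - g (-1)| with hsdef
  set D : Ω → ℝ := fun ω => |g 0| + |g (f ω)| + s * f ω with hDdef
  have hID : Integrable D P := by
    apply Integrable.add
    · exact (integrable_const _).add hI.abs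
    · exact hIntf.const_mul s
  apply tendsto_integral_of_dominated_convergence D
  · intro m
    exact (hgc.measurable.comp (Finset.measurable_sum _ (fun k _ =>
      Measurable.ite (hAm k) measurable_const measurable_const))).aestronglyMeasurable
  · exact hID
  · intro m
    filter_upwards [hae] with ω hω
    obtain ⟨K, hK⟩ := Filter.eventually_atTop.mp hω
    have hfacts := aux_tsum (a := fun k => if ((k + 1 : ℕ) : ℝ≥0∞) ≤ W k ω then (1:ℝ) else 0)
      (fun k => by split <;> norm_num) (K := K)
      (fun k hk => by
        rw [if_neg (show ¬ ((k + 1 : ℕ) : ℝ≥0∞) ≤ W k ω from hK k hk)])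
    have h1 : (∑ k ∈ Finset.range m,
        if ((k + 1 : ℕ) : ℝ≥0∞) ≤ W k ω then (1:ℝ) else 0) ∈ Set.Icc (0:ℝ) (f ω) :=
      ⟨Finset.sum_nonneg (fun k _ => by split <;> norm_num), hfacts.1 m⟩
    have := cx_abs_bound hg h1.1 h1.2
    simpa [Real.norm_eq_abs, hDdef, hsdef] using this
  · filter_upwards [hae] with ω hω
    obtain ⟨K, hK⟩ := Filter.eventually_atTop.mp hω
    have hfacts := aux_tsum (a := fun k => if ((k + 1 : ℕ) : ℝ≥0∞) ≤ W k ω then (1:ℝ) else 0)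
      (fun k => by split <;> norm_num) (K := K)
      (fun k hk => by
        rw [if_neg (show ¬ ((k + 1 : ℕ) : ℝ≥0∞) ≤ W k ω from hK k hk)])
    exact (hgc.tendsto (f ω)).comp hfacts.2.2

end Helpers

/-- For i.i.d. `[0,∞]`-valued random variables `N_0, N_1, N_2, …`, the sums
`Φ^m = Σ_{k=1}^m 1[N_k ≥ k]` and `Φ_0^m = Σ_{k=1}^m 1[N_0 ≥ k]` satisfy `Φ^m ≤_cx Φ_0^m`;
moreover, if `Σ_k P(N_0 ≥ k) < ∞`, the a.s. finite infinite sums `Φ = Σ_{k≥1} 1[N_k ≥ k]`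
and `Φ_0 = Σ_{k≥1} 1[N_0 ≥ k]` satisfy `Φ ≤_cx Φ_0`. -/
theorem ginibre_radii_convex_order
    {Ω : Type*} [MeasurableSpace Ω] (P : Measure Ω) [IsProbabilityMeasure P]
    (N : ℕ → Ω → ℝ≥0∞) (hmeas : ∀ k, Measurable (N k))
    (hindep : ProbabilityTheory.iIndepFun N P)
    (hident : ∀ k, P.map (N k) = P.map (N 0)) :
    (∀ m : ℕ, ∀ g : ℝ → ℝ, ConvexOn ℝ Set.univ g →
      Integrable (fun ω => g (∑ k ∈ Finset.Icc 1 m,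
        if (k : ℝ≥0∞) ≤ N k ω then (1 : ℝ) else 0)) P →
      Integrable (fun ω => g (∑ k ∈ Finset.Icc 1 m,
        if (k : ℝ≥0∞) ≤ N 0 ω then (1 : ℝ) else 0)) P →
      ∫ ω, g (∑ k ∈ Finset.Icc 1 m, if (k : ℝ≥0∞) ≤ N k ω then (1 : ℝ) else 0) ∂P ≤
        ∫ ω, g (∑ k ∈ Finset.Icc 1 m, if (k : ℝ≥0∞) ≤ N 0 ω then (1 : ℝ) else 0) ∂P) ∧
    ((∑' k : ℕ, P {ω | ((k + 1 : ℕ) : ℝ≥0∞) ≤ N 0 ω}) < ⊤ →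
      ∀ g : ℝ → ℝ, ConvexOn ℝ Set.univ g →
        Integrable (fun ω => g (∑' k : ℕ,
          if ((k + 1 : ℕ) : ℝ≥0∞) ≤ N (k + 1) ω then (1 : ℝ) else 0)) P →
        Integrable (fun ω => g (∑' k : ℕ,
          if ((k + 1 : ℕ) : ℝ≥0∞) ≤ N 0 ω then (1 : ℝ) else 0)) P →
        ∫ ω, g (∑' k : ℕ, if ((k + 1 : ℕ) : ℝ≥0∞) ≤ N (k + 1) ω then (1 : ℝ) else 0) ∂P ≤
          ∫ ω, g (∑' k : ℕ, if ((k + 1 : ℕ) : ℝ≥0∞) ≤ N 0 ω then (1 : ℝ) else 0) ∂P) := by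
  constructor
  · intro m g hg _ _
    exact finite_cx hmeas hindep hident m g hg
  · intro hfin g hg hIL hIR
    have hfinR : (∑' k : ℕ, P {ω | ((k + 1 : ℕ) : ℝ≥0∞) ≤ N 0 ω}) ≠ ⊤ := hfin.ne
    have hPeq : ∀ k : ℕ, P {ω | ((k + 1 : ℕ) : ℝ≥0∞) ≤ N (k + 1) ω}
        = P {ω | ((k + 1 : ℕ) : ℝ≥0∞) ≤ N 0 ω} := fun k => ident_prob hmeas hident (k+1) _
    have hfinL : (∑' k : ℕ, P {ω | ((k + 1 : ℕ) : ℝ≥0∞) ≤ N (k + 1) ω}) ≠ ⊤ := by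
      rw [tsum_congr hPeq]; exact hfinR
    have hL := side_facts (W := fun k => N (k + 1)) (fun k => hmeas (k+1)) hfinL hg hIL
    have hR := side_facts (W := fun _ => N 0) (fun _ => hmeas 0) hfinR hg hIR
    refine le_of_tendsto_of_tendsto' hL hR ?_
    intro m
    have key := finite_cx hmeas hindep hident m g hg
    have eL : (fun ω => g (∑ k ∈ Finset.Icc 1 m, if (k : ℝ≥0∞) ≤ N k ω then (1:ℝ) else 0))
        = fun ω => g (∑ k ∈ Finset.range m,
            if ((k + 1 : ℕ) : ℝ≥0∞) ≤ N (k + 1) ω then (1:ℝ) else 0) :=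
      funext fun ω => congrArg g (reindex_sum (fun n => n) m ω)
    have eR : (fun ω => g (∑ k ∈ Finset.Icc 1 m, if (k : ℝ≥0∞) ≤ N 0 ω then (1:ℝ) else 0))
        = fun ω => g (∑ k ∈ Finset.range m,
            if ((k + 1 : ℕ) : ℝ≥0∞) ≤ N 0 ω then (1:ℝ) else 0) :=
      funext fun ω => congrArg g (reindex_sum (fun _ => 0) m ω)
    calc ∫ ω, g (∑ k ∈ Finset.range m,
            if ((k + 1 : ℕ) : ℝ≥0∞) ≤ N (k + 1) ω then (1:ℝ) else 0) ∂P
        = ∫ ω, g (∑ k ∈ Finset.Icc 1 m, if (k : ℝ≥0∞) ≤ N k ω then (1:ℝ) else 0) ∂P := by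
          rw [eL]
      _ ≤ ∫ ω, g (∑ k ∈ Finset.Icc 1 m, if (k : ℝ≥0∞) ≤ N 0 ω then (1:ℝ) else 0) ∂P := key
      _ = ∫ ω, g (∑ k ∈ Finset.range m,
            if ((k + 1 : ℕ) : ℝ≥0∞) ≤ N 0 ω then (1:ℝ) else 0) ∂P := by rw [eR]
end
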